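/- arXiv:2503.07001 — 7 statements merged into one kernel-verified Lean document; each statement's English description precedes it below -/
import Mathlib

section
/- Let ε₁, …, εₙ be i.i.d. Rademacher random variables, let a₁, …, aₙ, b₁, …, bₙ be real numbers with ∑_{i=1}^n aᵢ² = ∑_{i=1}^n bᵢ² = 1 such that the vector (a₁², …, aₙ²) is majorized by (b₁², …, bₙ²) in the Schur order, and let Φ : ℝ → ℝ be an even, twice continuously differentiable function whose second derivative Φ'' is convex. Then E Φ(∑_{i=1}^n bᵢεᵢ) ≤ E Φ(∑_{i=1}^n aᵢεᵢ). -/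
open MeasureTheory ProbabilityTheory Real

/-- The law of a Rademacher random variable: `±1` with probability `1/2` each. -/
noncomputable def rademacherLaw : Measure ℝ :=
  ((1 : ENNReal) / 2) • Measure.dirac 1 + ((1 : ENNReal) / 2) • Measure.dirac (-1)

/-- `x` is majorized by `y` in the Schur order: for every `k`, the sum of the `k` largest
coordinates of `x` is at most the sum of the `k` largest coordinates of `y`.  This is
expressed equivalently as: every partial sum of `x` over a set `A` is dominated by some
partial sum of `y` over a set of the same cardinality. -/
def IsMajorizedBy {n : ℕ} (x y : Fin n → ℝ) : Prop :=
  ∀ A : Finset (Fin n), ∃ B : Finset (Fin n),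
    B.card = A.card ∧ ∑ i ∈ A, x i ≤ ∑ i ∈ B, y i


open Real Set

section Analytic

/-- convex functions have increasing symmetric spread. -/
lemma even_pair_mono {f : ℝ → ℝ} (hf : ConvexOn ℝ Set.univ f) (c : ℝ) :
    MonotoneOn (fun r => f (c + r) + f (c - r)) (Set.Ici 0) := by
  rintro r₁ (h₁ : (0:ℝ) ≤ r₁) r₂ (h₂ : (0:ℝ) ≤ r₂) h12
  rcases eq_or_lt_of_le h₂ with h | h
  · have hr1 : r₁ = 0 := le_antisymm (h ▸ h12) h₁
    simp [hr1, ← h]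
  · set a := (r₂ + r₁) / (2 * r₂) with ha
    set b := (r₂ - r₁) / (2 * r₂) with hb
    have hr2 : (2 : ℝ) * r₂ ≠ 0 := by positivity
    have hab : a + b = 1 := by rw [ha, hb]; field_simp; ring
    have ha0 : 0 ≤ a := by positivity
    have hb0 : 0 ≤ b := div_nonneg (by linarith) (by positivity)
    have e1 : a * (c + r₂) + b * (c - r₂) = c + r₁ := by
      rw [ha, hb]; field_simp; ring
    have e2 : b * (c + r₂) + a * (c - r₂) = c - r₁ := by
      rw [ha, hb]; field_simp; ring
    have h1 := hf.2 (mem_univ (c + r₂)) (mem_univ (c - r₂)) ha0 hb0 hab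
    have h2 := hf.2 (mem_univ (c + r₂)) (mem_univ (c - r₂)) hb0 ha0 (by linarith)
    simp only [smul_eq_mul] at h1 h2
    rw [e1] at h1; rw [e2] at h2
    have e3 : a * f (c + r₂) + b * f (c - r₂) + (b * f (c + r₂) + a * f (c - r₂))
        = (a + b) * (f (c + r₂) + f (c - r₂)) := by ring
    rw [hab, one_mul] at e3
    dsimp only
    linarith

lemma phi'_diff {Φ : ℝ → ℝ} (hC2 : ContDiff ℝ 2 Φ) : Differentiable ℝ (deriv Φ) := by
  have h : ContDiff ℝ 1 (deriv Φ) := by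
    have h2 := (contDiff_succ_iff_deriv (n := 1)).mp (by exact_mod_cast hC2)
    exact h2.2.2
  exact h.differentiable one_ne_zero

/-- the auxiliary function ψ. -/
lemma psi_hasDeriv {Φ : ℝ → ℝ} (hC2 : ContDiff ℝ 2 Φ) (c r : ℝ) :
    HasDerivAt (fun r => deriv Φ (c + r) - deriv Φ (c - r))
      (deriv (deriv Φ) (c + r) + deriv (deriv Φ) (c - r)) r := by
  have hd := phi'_diff hC2
  have h1 : HasDerivAt (fun r : ℝ => deriv Φ (c + r)) (deriv (deriv Φ) (c + r) * 1) r :=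
    ((hd (c + r)).hasDerivAt).comp r ((hasDerivAt_id r).const_add c)
  have h2 : HasDerivAt (fun r : ℝ => deriv Φ (c - r)) (deriv (deriv Φ) (c - r) * (-1)) r := by
    have hi : HasDerivAt (fun r : ℝ => c - r) (-1) r := by
      simpa using (hasDerivAt_id r).const_sub c
    exact ((hd (c - r)).hasDerivAt).comp r hi
  have h3 := h1.sub h2
  exact h3.congr_deriv (by ring)

lemma psi_convex {Φ : ℝ → ℝ} (hC2 : ContDiff ℝ 2 Φ)
    (hconv : ConvexOn ℝ Set.univ (deriv (deriv Φ))) (c : ℝ) :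
    ConvexOn ℝ (Set.Ici 0) (fun r => deriv Φ (c + r) - deriv Φ (c - r)) := by
  apply MonotoneOn.convexOn_of_deriv (convex_Ici 0)
  · exact (Continuous.sub
      ((phi'_diff hC2).continuous.comp (by continuity))
      ((phi'_diff hC2).continuous.comp (by continuity))).continuousOn
  · intro r _
    exact ((psi_hasDeriv hC2 c r).differentiableAt).differentiableWithinAt
  · rw [interior_Ici]
    intro r₁ h₁ r₂ h₂ h12
    rw [(psi_hasDeriv hC2 c r₁).deriv, (psi_hasDeriv hC2 c r₂).deriv]
    exact even_pair_mono hconv c (Set.mem_Ici.mpr (le_of_lt (Set.mem_Ioi.mp h₁))) (Set.mem_Ici.mpr (le_of_lt (Set.mem_Ioi.mp h₂))) h12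

lemma psi_slope_mono {Φ : ℝ → ℝ} (hC2 : ContDiff ℝ 2 Φ)
    (hconv : ConvexOn ℝ Set.univ (deriv (deriv Φ))) (c : ℝ) {r₁ r₂ : ℝ}
    (h₁ : 0 < r₁) (h12 : r₁ ≤ r₂) :
    (deriv Φ (c + r₁) - deriv Φ (c - r₁)) / r₁ ≤
    (deriv Φ (c + r₂) - deriv Φ (c - r₂)) / r₂ := by
  set ψ := fun r => deriv Φ (c + r) - deriv Φ (c - r) with hψ
  have h0 : ψ 0 = 0 := by simp [hψ]
  have hm := (psi_convex hC2 hconv c).slope_mono (x := 0) (le_refl (0:ℝ))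
  have m1 : r₁ ∈ Set.Ici (0:ℝ) \ {0} := ⟨le_of_lt h₁, by simp [ne_of_gt h₁]⟩
  have hr2 : r₂ ≠ 0 := ne_of_gt (h₁.trans_le h12)
  have m2 : r₂ ∈ Set.Ici (0:ℝ) \ {0} := ⟨(h₁.trans_le h12).le, by simpa using hr2⟩
  have := hm m1 m2 h12
  simpa [slope_def_field, h0] using this

/-- derivative of `g c`. -/
lemma g_hasDeriv {Φ : ℝ → ℝ} (hC2 : ContDiff ℝ 2 Φ) (c : ℝ) {t : ℝ} (ht : 0 < t) :
    HasDerivAt (fun t => Φ (Real.sqrt t + c) + Φ (c - Real.sqrt t))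
      ((deriv Φ (Real.sqrt t + c) - deriv Φ (c - Real.sqrt t)) * (1 / (2 * Real.sqrt t))) t := by
  have hΦd : Differentiable ℝ Φ := hC2.differentiable (by norm_num)
  have hs : HasDerivAt Real.sqrt (1 / (2 * Real.sqrt t)) t :=
    Real.hasDerivAt_sqrt (ne_of_gt ht)
  have h1 : HasDerivAt (fun t => Φ (Real.sqrt t + c))
      (deriv Φ (Real.sqrt t + c) * (1 / (2 * Real.sqrt t))) t :=
    ((hΦd (Real.sqrt t + c)).hasDerivAt).comp t (hs.add_const c)
  have h2 : HasDerivAt (fun t => Φ (c - Real.sqrt t))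
      (deriv Φ (c - Real.sqrt t) * (-(1 / (2 * Real.sqrt t)))) t :=
    ((hΦd (c - Real.sqrt t)).hasDerivAt).comp t (hs.const_sub c)
  have h3 := h1.add h2
  exact h3.congr_deriv (by ring)

lemma g_convex {Φ : ℝ → ℝ} (hC2 : ContDiff ℝ 2 Φ)
    (hconv : ConvexOn ℝ Set.univ (deriv (deriv Φ))) (c : ℝ) :
    ConvexOn ℝ (Set.Ici 0) (fun t => Φ (Real.sqrt t + c) + Φ (c - Real.sqrt t)) := by
  apply MonotoneOn.convexOn_of_deriv (convex_Ici 0)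
  · exact (Continuous.add
      (hC2.continuous.comp (Real.continuous_sqrt.add continuous_const))
      (hC2.continuous.comp (continuous_const.sub Real.continuous_sqrt))).continuousOn
  · rw [interior_Ici]
    intro t ht
    exact ((g_hasDeriv hC2 c ht).differentiableAt).differentiableWithinAt
  · rw [interior_Ici]
    intro t₁ h₁ t₂ h₂ h12
    rw [(g_hasDeriv hC2 c h₁).deriv, (g_hasDeriv hC2 c h₂).deriv]
    have hs1 : (0:ℝ) < Real.sqrt t₁ := Real.sqrt_pos.mpr h₁
    have hs2 : (0:ℝ) < Real.sqrt t₂ := Real.sqrt_pos.mpr h₂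
    have hs12 : Real.sqrt t₁ ≤ Real.sqrt t₂ := Real.sqrt_le_sqrt h12
    have key := psi_slope_mono hC2 hconv c hs1 hs12
    have e : ∀ s x : ℝ, x * (1 / (2 * s)) = (x / s) / 2 := by
      intro s x; rw [mul_one_div, div_div, mul_comm]
    rw [e, e, show Real.sqrt t₁ + c = c + Real.sqrt t₁ from add_comm _ _,
      show Real.sqrt t₂ + c = c + Real.sqrt t₂ from add_comm _ _]
    linarith

/-- two-point spread inequality for convex functions. -/
lemma spread {g : ℝ → ℝ} (hg : ConvexOn ℝ (Set.Ici 0) g) {p q p' q' : ℝ}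
    (h0 : 0 ≤ q') (hq : q' ≤ q) (hqp : q ≤ p) (hp : p ≤ p') (hsum : p + q = p' + q') :
    g p + g q ≤ g p' + g q' := by
  rcases eq_or_lt_of_le (hq.trans (hqp.trans hp)) with h | h
  · have hqq : q = q' := le_antisymm (by linarith) hq
    have hpp : p = p' := by linarith
    rw [hqq, hpp]
  · set lam := (p - q') / (p' - q') with hlam
    have hd : (0:ℝ) < p' - q' := by linarith
    have hl0 : 0 ≤ lam := div_nonneg (by linarith) (le_of_lt hd)
    have hl1 : lam ≤ 1 := by rw [hlam, div_le_one hd]; linarith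
    have e1 : lam * p' + (1 - lam) * q' = p := by
      rw [hlam]; field_simp; ring
    have e2 : (1 - lam) * p' + lam * q' = q := by
      have hq2 : q = p' + q' - p := by linarith
      rw [hq2, hlam]; field_simp; ring
    have mem1 : p' ∈ Set.Ici (0:ℝ) := by simp; linarith
    have mem2 : q' ∈ Set.Ici (0:ℝ) := by simpa using h0
    have h1 : g (lam • p' + (1 - lam) • q') ≤ lam • g p' + (1 - lam) • g q' :=
      hg.2 mem1 mem2 hl0 (by linarith) (by ring)
    have h2 : g ((1 - lam) • p' + lam • q') ≤ (1 - lam) • g p' + lam • g q' :=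
      hg.2 mem1 mem2 (by linarith) hl0 (by ring)
    simp only [smul_eq_mul] at h1 h2
    rw [e1] at h1; rw [e2] at h2
    linarith

/-- The key four-point inequality. -/
lemma key4 {Φ : ℝ → ℝ} (hC2 : ContDiff ℝ 2 Φ)
    (hconv : ConvexOn ℝ Set.univ (deriv (deriv Φ)))
    (C X Y δ : ℝ) (hY : 0 ≤ Y) (hδ : 0 ≤ δ) (hord : Y + δ ≤ X - δ) :
    Φ (Real.sqrt X + Real.sqrt Y + C) + Φ (C - (Real.sqrt X + Real.sqrt Y)) +
      (Φ (Real.sqrt X - Real.sqrt Y + C) + Φ (C - (Real.sqrt X - Real.sqrt Y))) ≤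
    Φ (Real.sqrt (X - δ) + Real.sqrt (Y + δ) + C) +
      Φ (C - (Real.sqrt (X - δ) + Real.sqrt (Y + δ))) +
      (Φ (Real.sqrt (X - δ) - Real.sqrt (Y + δ) + C) +
        Φ (C - (Real.sqrt (X - δ) - Real.sqrt (Y + δ)))) := by
  have hX : 0 ≤ X := by linarith
  set u := Real.sqrt X with hu_def
  set v := Real.sqrt Y with hv_def
  set u' := Real.sqrt (X - δ) with hu'_def
  set v' := Real.sqrt (Y + δ) with hv'_def
  have hu : 0 ≤ u := Real.sqrt_nonneg _
  have hv : 0 ≤ v := Real.sqrt_nonneg _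
  have hu' : 0 ≤ u' := Real.sqrt_nonneg _
  have hv' : 0 ≤ v' := Real.sqrt_nonneg _
  have hvu : v ≤ u := Real.sqrt_le_sqrt (by linarith)
  have hv'u' : v' ≤ u' := Real.sqrt_le_sqrt (by linarith)
  have hu2 : u ^ 2 = X := Real.sq_sqrt hX
  have hv2 : v ^ 2 = Y := Real.sq_sqrt hY
  have hu'2 : u' ^ 2 = X - δ := Real.sq_sqrt (by linarith)
  have hv'2 : v' ^ 2 = Y + δ := Real.sq_sqrt (by linarith)
  have huv : u * v ≤ u' * v' := by
    rw [hu_def, hv_def, hu'_def, hv'_def,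
      ← Real.sqrt_mul hX, ← Real.sqrt_mul (by linarith : (0:ℝ) ≤ X - δ)]
    apply Real.sqrt_le_sqrt
    nlinarith
  have hsum : ((u + v) ^ 2) + ((u - v) ^ 2) = ((u' + v') ^ 2) + ((u' - v') ^ 2) := by nlinarith
  have hpp' : (u + v) ^ 2 ≤ (u' + v') ^ 2 := by nlinarith
  have hq'q : (u' - v') ^ 2 ≤ (u - v) ^ 2 := by nlinarith
  have hqp : (u - v) ^ 2 ≤ (u + v) ^ 2 := by nlinarith [mul_nonneg hu hv]
  have hq'0 : (0:ℝ) ≤ (u' - v') ^ 2 := sq_nonneg _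
  have key := spread (g_convex hC2 hconv C) hq'0 hq'q hqp hpp' hsum
  simp only [Real.sqrt_sq (by linarith : 0 ≤ u + v), Real.sqrt_sq (by linarith : 0 ≤ u - v),
    Real.sqrt_sq (by linarith : 0 ≤ u' + v'), Real.sqrt_sq (by linarith : 0 ≤ u' - v')] at key
  linarith

end Analytic

noncomputable def radSign (b : Bool) : ℝ := if b then 1 else -1

@[simp] lemma radSign_true : radSign true = 1 := rfl
@[simp] lemma radSign_false : radSign false = -1 := rfl

noncomputable def radSum {n : ℕ} (a : Fin n → ℝ) (s : Fin n → Bool) : ℝ :=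
  ∑ i, a i * radSign (s i)

noncomputable def radAvg {n : ℕ} (Φ : ℝ → ℝ) (a : Fin n → ℝ) : ℝ :=
  ∑ s : Fin n → Bool, Φ (radSum a s)

lemma radAvg_perm {n : ℕ} (Φ : ℝ → ℝ) (a : Fin n → ℝ) (σ : Equiv.Perm (Fin n)) :
    radAvg Φ (a ∘ σ) = radAvg Φ a := by
  unfold radAvg
  apply Fintype.sum_equiv (Equiv.arrowCongr σ (Equiv.refl Bool))
  intro s
  congr 1
  unfold radSum
  rw [← Equiv.sum_comp σ (fun i => a i * radSign ((Equiv.arrowCongr σ (Equiv.refl Bool)) s i))]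
  apply Finset.sum_congr rfl
  intro i _
  simp

lemma radAvg_abs {n : ℕ} (Φ : ℝ → ℝ) (a : Fin n → ℝ) :
    radAvg Φ (fun i => |a i|) = radAvg Φ a := by
  unfold radAvg
  have inv : Function.Involutive
      (fun s : Fin n → Bool => fun i => xor (decide (a i < 0)) (s i)) := by
    intro s; funext i; simp
  apply Fintype.sum_equiv inv.toPerm
  intro s
  congr 1
  unfold radSum
  apply Finset.sum_congr rfl
  intro i _
  show |a i| * radSign (s i) = a i * radSign (xor (decide (a i < 0)) (s i))
  rcases le_or_gt 0 (a i) with h | h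
  · simp [radSign, abs_of_nonneg h, not_lt.mpr h]
  · cases hs : s i <;> simp [radSign, hs, abs_of_neg h, h]

section Pinch

variable {n : ℕ} (j k : Fin n)

def pairSplit (hjk : j ≠ k) :
    (Fin n → Bool) ≃ (Bool × Bool × ({i : Fin n // i ≠ j ∧ i ≠ k} → Bool)) where
  toFun s := (s j, s k, fun i => s i.1)
  invFun p i := if h1 : i = j then p.1 else if h2 : i = k then p.2.1 else p.2.2 ⟨i, h1, h2⟩
  left_inv s := by
    funext i
    by_cases h1 : i = j
    · subst h1; simp
    · by_cases h2 : i = k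
      · subst h2; simp [h1]
      · simp [h1, h2]
  right_inv p := by
    obtain ⟨b, c, t⟩ := p
    refine Prod.ext ?_ (Prod.ext ?_ ?_)
    · simp
    · simp [Ne.symm hjk]
    · funext i
      simp [i.2.1, i.2.2]

lemma sum_split_two (hjk : j ≠ k) (f : Fin n → ℝ) :
    ∑ i, f i = f j + (f k + ∑ i : {i : Fin n // i ≠ j ∧ i ≠ k}, f i.1) := by
  have e1 : ∑ i : {i : Fin n // i ≠ j ∧ i ≠ k}, f i.1
      = ∑ i ∈ Finset.univ.filter (fun i => i ≠ j ∧ i ≠ k), f i :=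
    (Finset.sum_subtype _ (by simp) f).symm
  rw [e1, ← Finset.sum_filter_add_sum_filter_not Finset.univ (fun i => i = j ∨ i = k) f]
  have h2 : Finset.univ.filter (fun i : Fin n => i = j ∨ i = k) = {j, k} := by
    ext i; simp
  have h3 : Finset.univ.filter (fun i : Fin n => ¬(i = j ∨ i = k))
      = Finset.univ.filter (fun i : Fin n => i ≠ j ∧ i ≠ k) := by
    apply Finset.filter_congr; intro i _; simp [not_or]
  rw [h2, Finset.sum_pair hjk, h3]
  ring

lemma radAvg_split (hjk : j ≠ k) (Φ : ℝ → ℝ) (w : Fin n → ℝ) :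
    radAvg Φ w = ∑ t : ({i : Fin n // i ≠ j ∧ i ≠ k} → Bool), ∑ b : Bool, ∑ c : Bool,
      Φ (w j * radSign b + (w k * radSign c
        + ∑ i : {i : Fin n // i ≠ j ∧ i ≠ k}, w i.1 * radSign (t i))) := by
  unfold radAvg
  rw [← Equiv.sum_comp (pairSplit j k hjk).symm (fun s => Φ (radSum w s))]
  rw [Fintype.sum_prod_type]
  have step1 : ∀ b : Bool,
      (∑ q : Bool × ({i : Fin n // i ≠ j ∧ i ≠ k} → Bool),
        Φ (radSum w ((pairSplit j k hjk).symm (b, q))))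
      = ∑ c : Bool, ∑ t : ({i : Fin n // i ≠ j ∧ i ≠ k} → Bool),
          Φ (radSum w ((pairSplit j k hjk).symm (b, c, t))) := fun b =>
    Fintype.sum_prod_type _
  simp only [step1]
  have swap1 : (∑ b : Bool, ∑ c : Bool, ∑ t : ({i : Fin n // i ≠ j ∧ i ≠ k} → Bool),
        Φ (radSum w ((pairSplit j k hjk).symm (b, c, t))))
      = ∑ t : ({i : Fin n // i ≠ j ∧ i ≠ k} → Bool), ∑ b : Bool, ∑ c : Bool,
        Φ (radSum w ((pairSplit j k hjk).symm (b, c, t))) := by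
    calc (∑ b : Bool, ∑ c : Bool, ∑ t : ({i : Fin n // i ≠ j ∧ i ≠ k} → Bool),
          Φ (radSum w ((pairSplit j k hjk).symm (b, c, t))))
        = ∑ b : Bool, ∑ t : ({i : Fin n // i ≠ j ∧ i ≠ k} → Bool), ∑ c : Bool,
            Φ (radSum w ((pairSplit j k hjk).symm (b, c, t))) :=
          Finset.sum_congr rfl (fun b _ => Finset.sum_comm)
      _ = ∑ t : ({i : Fin n // i ≠ j ∧ i ≠ k} → Bool), ∑ b : Bool, ∑ c : Bool,
            Φ (radSum w ((pairSplit j k hjk).symm (b, c, t))) := Finset.sum_comm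
  rw [swap1]
  apply Finset.sum_congr rfl; intro t _
  apply Finset.sum_congr rfl; intro b _
  apply Finset.sum_congr rfl; intro c _
  congr 1
  rw [radSum, sum_split_two j k hjk]
  have ej : ((pairSplit j k hjk).symm (b, c, t)) j = b := by simp [pairSplit]
  have ek : ((pairSplit j k hjk).symm (b, c, t)) k = c := by simp [pairSplit, Ne.symm hjk]
  have eo : ∀ i : {i : Fin n // i ≠ j ∧ i ≠ k}, ((pairSplit j k hjk).symm (b, c, t)) i.1 = t i := by
    intro i; simp [pairSplit, i.2.1, i.2.2]
  rw [ej, ek]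
  congr 2
  exact Finset.sum_congr rfl (fun i _ => by rw [eo i])

end Pinch

lemma radAvg_pinch {Φ : ℝ → ℝ} (hC2 : ContDiff ℝ 2 Φ)
    (hconv : ConvexOn ℝ Set.univ (deriv (deriv Φ)))
    {n : ℕ} (y : Fin n → ℝ) (j k : Fin n) (hjk : j ≠ k) (δ : ℝ)
    (h0 : 0 ≤ y k) (hδ : 0 ≤ δ) (hord : y k + δ ≤ y j - δ) :
    radAvg Φ (fun i => Real.sqrt (y i)) ≤
    radAvg Φ (fun i => Real.sqrt (Function.update (Function.update y j (y j - δ)) k (y k + δ) i)) := by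
  rw [radAvg_split j k hjk, radAvg_split j k hjk]
  apply Finset.sum_le_sum
  intro t _
  set y' := Function.update (Function.update y j (y j - δ)) k (y k + δ) with hy'
  have hrest : (∑ i : {i : Fin n // i ≠ j ∧ i ≠ k}, Real.sqrt (y' i.1) * radSign (t i))
      = ∑ i : {i : Fin n // i ≠ j ∧ i ≠ k}, Real.sqrt (y i.1) * radSign (t i) := by
    apply Finset.sum_congr rfl
    intro i _
    rw [hy', Function.update_of_ne i.2.2, Function.update_of_ne i.2.1]
  have ej : y' j = y j - δ := by
    rw [hy', Function.update_of_ne hjk, Function.update_self]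
  have ek : y' k = y k + δ := by rw [hy', Function.update_self]
  rw [hrest, ej, ek]
  set C := ∑ i : {i : Fin n // i ≠ j ∧ i ≠ k}, Real.sqrt (y i.1) * radSign (t i) with hC
  have K := key4 hC2 hconv C (y j) (y k) δ h0 hδ hord
  simp only [Fintype.sum_bool, radSign_true, radSign_false]
  ring_nf
  ring_nf at K
  linarith

noncomputable def prefixSum {n : ℕ} (f : Fin n → ℝ) (m : ℕ) : ℝ :=
  ∑ i ∈ Finset.univ.filter (fun i : Fin n => (i : ℕ) < m), f i

lemma prefixSum_succ {n : ℕ} (f : Fin n → ℝ) {m : ℕ} (hm : m < n) :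
    prefixSum f (m + 1) = prefixSum f m + f ⟨m, hm⟩ := by
  unfold prefixSum
  have h : Finset.univ.filter (fun i : Fin n => (i : ℕ) < m + 1)
      = insert (⟨m, hm⟩ : Fin n) (Finset.univ.filter (fun i : Fin n => (i : ℕ) < m)) := by
    ext i
    simp only [Finset.mem_filter, Finset.mem_univ, true_and, Finset.mem_insert, Fin.ext_iff]
    omega
  rw [h, Finset.sum_insert (by simp)]
  ring

lemma prefixSum_update {n : ℕ} (f : Fin n → ℝ) (i : Fin n) (v : ℝ) (m : ℕ) :
    prefixSum (Function.update f i v) m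
      = if (i : ℕ) < m then prefixSum f m - f i + v else prefixSum f m := by
  unfold prefixSum
  by_cases h : (i : ℕ) < m
  · rw [if_pos h]
    have hmem : i ∈ Finset.univ.filter (fun i : Fin n => (i : ℕ) < m) := by simp [h]
    rw [Finset.sum_update_of_mem hmem]
    have := Finset.add_sum_erase _ f hmem
    rw [Finset.erase_eq] at this
    linarith
  · rw [if_neg h, Finset.sum_update_of_notMem (by simp [h])]

lemma sum_update_univ {n : ℕ} (f : Fin n → ℝ) (i : Fin n) (v : ℝ) :
    ∑ j, Function.update f i v j = (∑ j, f j) - f i + v := by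
  rw [Finset.sum_update_of_mem (Finset.mem_univ i)]
  have := Finset.add_sum_erase _ f (Finset.mem_univ i)
  rw [Finset.erase_eq] at this
  linarith

lemma radAvg_chain {Φ : ℝ → ℝ} (hC2 : ContDiff ℝ 2 Φ)
    (hconv : ConvexOn ℝ Set.univ (deriv (deriv Φ)))
    {n : ℕ} (x : Fin n → ℝ) (hx0 : ∀ i, 0 ≤ x i)
    (hxa : ∀ i j : Fin n, i ≤ j → x j ≤ x i) :
    ∀ (m : ℕ) (y : Fin n → ℝ), (∀ i, 0 ≤ y i) →
      (∀ k : ℕ, prefixSum x k ≤ prefixSum y k) → (∑ i, y i = ∑ i, x i) →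
      (Finset.univ.filter (fun i => x i ≠ y i)).card ≤ m →
      radAvg Φ (fun i => Real.sqrt (y i)) ≤ radAvg Φ (fun i => Real.sqrt (x i)) := by
  intro m
  induction m with
  | zero =>
    intro y hy0 hpre hsum hcard
    have hempty : Finset.univ.filter (fun i => x i ≠ y i) = ∅ :=
      Finset.card_eq_zero.mp (Nat.le_zero.mp hcard)
    have hxy : ∀ i, x i = y i := by
      intro i
      by_contra h
      have : i ∈ Finset.univ.filter (fun i => x i ≠ y i) := by simp [h]
      rw [hempty] at this
      exact absurd this (Finset.notMem_empty i)
    rw [show y = x from funext fun i => (hxy i).symm]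
  | succ m ih =>
    intro y hy0 hpre hsum hcard
    by_cases hxy : ∀ i, x i = y i
    · rw [show y = x from funext fun i => (hxy i).symm]
    · push_neg at hxy
      -- K : the first index with y < x
      have hFk : (Finset.univ.filter (fun i => y i < x i)).Nonempty := by
        by_contra h
        rw [Finset.not_nonempty_iff_eq_empty] at h
        have hge : ∀ i, x i ≤ y i := by
          intro i
          by_contra hc
          have : i ∈ Finset.univ.filter (fun i => y i < x i) := by
            simp [lt_of_not_ge hc]
          rw [h] at this
          exact absurd this (Finset.notMem_empty i)
        have hzero : ∀ i ∈ Finset.univ, y i - x i = 0 := by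
          rw [← Finset.sum_eq_zero_iff_of_nonneg (fun i _ => by linarith [hge i])]
          rw [Finset.sum_sub_distrib]
          linarith
        obtain ⟨i0, hi0⟩ := hxy
        have := hzero i0 (Finset.mem_univ i0)
        exact hi0 (by linarith)
      set K := (Finset.univ.filter (fun i => y i < x i)).min' hFk with hKdef
      have hKmem : y K < x K := by
        have := (Finset.univ.filter (fun i => y i < x i)).min'_mem hFk
        simpa using this
      have hKmin : ∀ i, y i < x i → K ≤ i := by
        intro i hi
        exact Finset.min'_le _ _ (by simp [hi])
      -- J : the last index before K with x < y
      have hFj : (Finset.univ.filter (fun i => i < K ∧ x i < y i)).Nonempty := by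
        by_contra h
        rw [Finset.not_nonempty_iff_eq_empty] at h
        have heq : ∀ i, i < K → x i = y i := by
          intro i hiK
          have h1 : ¬(x i < y i) := by
            intro hc
            have : i ∈ Finset.univ.filter (fun i => i < K ∧ x i < y i) := by simp [hiK, hc]
            rw [h] at this
            exact absurd this (Finset.notMem_empty i)
          have h2 : ¬(y i < x i) := by
            intro hc
            exact absurd (hKmin i hc) (not_le.mpr hiK)
          linarith
        have h1 := hpre ((K : ℕ) + 1)
        rw [prefixSum_succ x K.isLt, prefixSum_succ y K.isLt] at h1
        have h2 : prefixSum x (K : ℕ) = prefixSum y (K : ℕ) := by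
          apply Finset.sum_congr rfl
          intro i hi
          simp only [Finset.mem_filter] at hi
          exact heq i (by rw [Fin.lt_def]; exact hi.2)
        simp only [Fin.eta] at h1
        linarith
      set J := (Finset.univ.filter (fun i => i < K ∧ x i < y i)).max' hFj with hJdef
      have hJmem : J < K ∧ x J < y J := by
        have := (Finset.univ.filter (fun i => i < K ∧ x i < y i)).max'_mem hFj
        simp only [Finset.mem_filter, Finset.mem_univ, true_and] at this
        exact this
      have hJmax : ∀ i, i < K → x i < y i → i ≤ J := by
        intro i h1 h2
        exact Finset.le_max' _ _ (by simp [h1, h2])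
      obtain ⟨hJK, hJlt⟩ := hJmem
      have hmid : ∀ i, J < i → i < K → x i = y i := by
        intro i h1 h2
        have hn1 : ¬(y i < x i) := fun hc => absurd (hKmin i hc) (not_le.mpr h2)
        have hn2 : ¬(x i < y i) := fun hc => absurd (hJmax i h2 hc) (not_le.mpr h1)
        linarith
      set δ := min (y J - x J) (x K - y K) with hδdef
      have hδpos : 0 < δ := lt_min (by linarith) (by linarith)
      have hxKJ : x K ≤ x J := hxa J K (le_of_lt hJK)
      have hord : y K + δ ≤ y J - δ := by
        have h1 : δ ≤ y J - x J := min_le_left _ _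
        have h2 : δ ≤ x K - y K := min_le_right _ _
        linarith
      have hJneK : J ≠ K := ne_of_lt hJK
      have hstep := radAvg_pinch hC2 hconv y J K hJneK δ (hy0 K) hδpos.le hord
      set y' := Function.update (Function.update y J (y J - δ)) K (y K + δ) with hy'def
      have ey'J : y' J = y J - δ := by
        rw [hy'def, Function.update_of_ne hJneK, Function.update_self]
      have ey'K : y' K = y K + δ := by rw [hy'def, Function.update_self]
      have ey'o : ∀ i, i ≠ J → i ≠ K → y' i = y i := by
        intro i h1 h2
        rw [hy'def, Function.update_of_ne h2, Function.update_of_ne h1]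
      -- invariants
      have hy'0 : ∀ i, 0 ≤ y' i := by
        intro i
        by_cases h1 : i = K
        · rw [h1, ey'K]; linarith [hy0 K]
        · by_cases h2 : i = J
          · rw [h2, ey'J]; linarith [hy0 K, hord]
          · rw [ey'o i h2 h1]; exact hy0 i
      have hy'sum : ∑ i, y' i = ∑ i, x i := by
        rw [hy'def, sum_update_univ, sum_update_univ,
          Function.update_of_ne (Ne.symm hJneK)]
        rw [hsum] at *
        linarith [hsum]
      have hy'pre : ∀ m', prefixSum x m' ≤ prefixSum y' m' := by
        intro m'
        rw [hy'def, prefixSum_update, prefixSum_update,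
          Function.update_of_ne (Ne.symm hJneK)]
        by_cases hK' : (K : ℕ) < m'
        · have hJ' : (J : ℕ) < m' := lt_trans hJK hK'
          rw [if_pos hK', if_pos hJ']
          have := hpre m'
          linarith
        · by_cases hJ' : (J : ℕ) < m'
          · rw [if_neg hK', if_pos hJ']
            -- need δ ≤ prefixSum y m' - prefixSum x m'
            have claim : ∀ d : ℕ, ∀ mm : ℕ, mm = (J : ℕ) + 1 + d → mm ≤ (K : ℕ) →
                y J - x J ≤ prefixSum y mm - prefixSum x mm := by
              intro d
              induction d with
              | zero =>
                intro mm hmm _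
                subst hmm
                rw [prefixSum_succ x J.isLt, prefixSum_succ y J.isLt]
                have := hpre (J : ℕ)
                simp only [Fin.eta]
                linarith
              | succ d ihd =>
                intro mm hmm hle
                have hm2 : (J : ℕ) + 1 + d < n := by
                  have := K.isLt; omega
                have e1 : mm = ((J : ℕ) + 1 + d) + 1 := by omega
                subst e1
                rw [prefixSum_succ x hm2, prefixSum_succ y hm2]
                have hmideq : x ⟨(J : ℕ) + 1 + d, hm2⟩ = y ⟨(J : ℕ) + 1 + d, hm2⟩ := by
                  apply hmid
                  · rw [Fin.lt_def]; simp; omega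
                  · rw [Fin.lt_def]; simp; omega
                have := ihd ((J : ℕ) + 1 + d) rfl (by omega)
                linarith
            have h1 : δ ≤ y J - x J := min_le_left _ _
            have h2 := claim (m' - ((J : ℕ) + 1)) m' (by omega) (by omega)
            linarith
          · rw [if_neg hK', if_neg hJ']
            exact hpre m'
      have hcard' : (Finset.univ.filter (fun i => x i ≠ y' i)).card ≤ m := by
        have hsub : Finset.univ.filter (fun i => x i ≠ y' i)
            ⊆ Finset.univ.filter (fun i => x i ≠ y i) := by
          intro i hi
          simp only [Finset.mem_filter, Finset.mem_univ, true_and] at hi ⊢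
          by_cases h1 : i = K
          · rw [h1]; exact ne_of_gt hKmem
          · by_cases h2 : i = J
            · rw [h2]; exact ne_of_lt hJlt
            · rw [← ey'o i h2 h1]; exact hi
        have hproper : ∃ i ∈ Finset.univ.filter (fun i => x i ≠ y i),
            i ∉ Finset.univ.filter (fun i => x i ≠ y' i) := by
          rcases le_total (y J - x J) (x K - y K) with h | h
          · refine ⟨J, by simp [ne_of_lt hJlt], ?_⟩
            simp only [Finset.mem_filter, Finset.mem_univ, true_and, not_not]
            rw [ey'J, hδdef, min_eq_left h]
            ring
          · refine ⟨K, by simp [ne_of_gt hKmem], ?_⟩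
            simp only [Finset.mem_filter, Finset.mem_univ, true_and, not_not]
            rw [ey'K, hδdef, min_eq_right h]
            ring
        obtain ⟨i0, hi0mem, hi0not⟩ := hproper
        have hss : Finset.univ.filter (fun i => x i ≠ y' i)
            ⊂ Finset.univ.filter (fun i => x i ≠ y i) :=
          (Finset.ssubset_iff_of_subset hsub).mpr ⟨i0, hi0mem, hi0not⟩
        have := Finset.card_lt_card hss
        omega
      calc radAvg Φ (fun i => Real.sqrt (y i))
          ≤ radAvg Φ (fun i => Real.sqrt (y' i)) := hstep
        _ ≤ radAvg Φ (fun i => Real.sqrt (x i)) := ih y' hy'0 hy'pre hy'sum hcard'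

lemma strictMono_fin_le {k : ℕ} (f : Fin k → ℕ) (hf : StrictMono f) : ∀ r : Fin k, (r : ℕ) ≤ f r := by
  have key : ∀ m : ℕ, ∀ r : Fin k, (r : ℕ) = m → m ≤ f r := by
    intro m
    induction m with
    | zero => intro r _; exact Nat.zero_le _
    | succ m ihm =>
      intro r hr
      have hm : m < k := by omega
      have hlt : (⟨m, hm⟩ : Fin k) < r := by rw [Fin.lt_def]; simp; omega
      have h1 := ihm ⟨m, hm⟩ rfl
      have h2 := hf hlt
      omega
  intro r; exact key (r : ℕ) r rfl

lemma prefixSum_eq_sum_fin {n : ℕ} (f : Fin n → ℝ) {k : ℕ} (hk : k ≤ n) :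
    prefixSum f k = ∑ r : Fin k, f (Fin.castLE hk r) := by
  unfold prefixSum
  have himg : Finset.univ.filter (fun i : Fin n => (i : ℕ) < k)
      = (Finset.univ : Finset (Fin k)).image (Fin.castLE hk) := by
    ext i
    simp only [Finset.mem_filter, Finset.mem_univ, true_and, Finset.mem_image]
    constructor
    · intro h; exact ⟨⟨i, h⟩, rfl⟩
    · rintro ⟨a, rfl⟩; exact a.2
  rw [himg, Finset.sum_image (by intro a _ b _ h; exact Fin.castLE_injective hk h)]

lemma sum_le_prefixSum {n : ℕ} (ys : Fin n → ℝ)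
    (hya : ∀ i j : Fin n, i ≤ j → ys j ≤ ys i) (B : Finset (Fin n)) :
    ∑ i ∈ B, ys i ≤ prefixSum ys B.card := by
  have hk : B.card ≤ n := by
    have := Finset.card_le_univ B
    simpa using this
  set k := B.card with hkdef
  have iso := B.orderIsoOfFin hkdef.symm
  have e1 : ∑ i ∈ B, ys i = ∑ r : Fin k, ys (B.orderIsoOfFin hkdef.symm r) := by
    rw [← Finset.sum_coe_sort B ys]
    exact (Fintype.sum_equiv (B.orderIsoOfFin hkdef.symm).toEquiv _ _ (fun r => rfl)).symm
  rw [e1, prefixSum_eq_sum_fin ys hk]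
  apply Finset.sum_le_sum
  intro r _
  apply hya
  rw [Fin.le_def]
  have hsm : StrictMono (fun r : Fin k => (((B.orderIsoOfFin hkdef.symm r) : Fin n) : ℕ)) := by
    intro r1 r2 h
    have := (B.orderIsoOfFin hkdef.symm).strictMono h
    exact this
  exact strictMono_fin_le _ hsm r


theorem radAvg_maj {Φ : ℝ → ℝ} (hC2 : ContDiff ℝ 2 Φ)
    (hconv : ConvexOn ℝ Set.univ (deriv (deriv Φ)))
    {n : ℕ} (x y : Fin n → ℝ) (hx0 : ∀ i, 0 ≤ x i) (hy0 : ∀ i, 0 ≤ y i)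
    (hsum : ∑ i, y i = ∑ i, x i) (hmaj : IsMajorizedBy x y) :
    radAvg Φ (fun i => Real.sqrt (y i)) ≤ radAvg Φ (fun i => Real.sqrt (x i)) := by
  set σx := Tuple.sort (fun i => -(x i)) with hσx
  set σy := Tuple.sort (fun i => -(y i)) with hσy
  set xs := x ∘ σx with hxs
  set ys := y ∘ σy with hys
  have hxsa : ∀ i j : Fin n, i ≤ j → xs j ≤ xs i := by
    intro i j hij
    have := Tuple.monotone_sort (fun i => -(x i)) hij
    simp only [Function.comp_apply] at this
    simp only [hxs, Function.comp_apply]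
    linarith
  have hysa : ∀ i j : Fin n, i ≤ j → ys j ≤ ys i := by
    intro i j hij
    have := Tuple.monotone_sort (fun i => -(y i)) hij
    simp only [Function.comp_apply] at this
    simp only [hys, Function.comp_apply]
    linarith
  have hxs0 : ∀ i, 0 ≤ xs i := fun i => hx0 _
  have hys0 : ∀ i, 0 ≤ ys i := fun i => hy0 _
  have hsum' : ∑ i, ys i = ∑ i, xs i := by
    rw [hys, hxs]
    rw [show ∑ i, (y ∘ σy) i = ∑ i, y i from Equiv.sum_comp σy y]
    rw [show ∑ i, (x ∘ σx) i = ∑ i, x i from Equiv.sum_comp σx x]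
    exact hsum
  have hpre : ∀ m : ℕ, prefixSum xs m ≤ prefixSum ys m := by
    intro m
    have hmn : Finset.univ.filter (fun i : Fin n => (i : ℕ) < m)
        = Finset.univ.filter (fun i : Fin n => (i : ℕ) < min m n) := by
      ext i
      simp only [Finset.mem_filter, Finset.mem_univ, true_and]
      have := i.isLt
      omega
    have hm' : min m n ≤ n := min_le_right _ _
    -- card of the filter
    have hcf : (Finset.univ.filter (fun i : Fin n => (i : ℕ) < min m n)).card = min m n := by
      have himg : Finset.univ.filter (fun i : Fin n => (i : ℕ) < min m n)
          = (Finset.univ : Finset (Fin (min m n))).image (Fin.castLE hm') := by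
        ext i
        simp only [Finset.mem_filter, Finset.mem_univ, true_and, Finset.mem_image]
        constructor
        · intro h; exact ⟨⟨i, h⟩, rfl⟩
        · rintro ⟨a, rfl⟩; exact a.2
      rw [himg, Finset.card_image_of_injective _ (Fin.castLE_injective hm')]
      simp
    set F := Finset.univ.filter (fun i : Fin n => (i : ℕ) < min m n) with hF
    have e1 : prefixSum xs m = ∑ i ∈ F.image σx, x i := by
      unfold prefixSum
      rw [hmn, Finset.sum_image (by intro a _ b _ h; exact σx.injective h)]
      rfl
    obtain ⟨B, hBcard, hBle⟩ := hmaj (F.image σx)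
    have hcardA : (F.image σx).card = min m n := by
      rw [Finset.card_image_of_injective _ σx.injective, hcf]
    have e2 : ∑ i ∈ B, y i = ∑ i ∈ B.image σy.symm, ys i := by
      rw [Finset.sum_image (by intro a _ b _ h; exact σy.symm.injective h)]
      apply Finset.sum_congr rfl
      intro b _
      simp [hys]
    have e3 : ∑ i ∈ B.image σy.symm, ys i ≤ prefixSum ys (B.image σy.symm).card :=
      sum_le_prefixSum ys hysa _
    have hcardB : (B.image σy.symm).card = min m n := by
      rw [Finset.card_image_of_injective _ σy.symm.injective, hBcard, hcardA]
    have e4 : prefixSum ys m = prefixSum ys (min m n) := by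
      unfold prefixSum; rw [hmn]
    rw [e1, e4]
    calc ∑ i ∈ F.image σx, x i ≤ ∑ i ∈ B, y i := hBle
      _ = ∑ i ∈ B.image σy.symm, ys i := e2
      _ ≤ prefixSum ys (B.image σy.symm).card := e3
      _ = prefixSum ys (min m n) := by rw [hcardB]
  have hchain := radAvg_chain hC2 hconv xs hxs0 hxsa
    ((Finset.univ.filter (fun i => xs i ≠ ys i)).card) ys hys0 hpre hsum' le_rfl
  have ex : radAvg Φ (fun i => Real.sqrt (xs i)) = radAvg Φ (fun i => Real.sqrt (x i)) := by
    have := radAvg_perm Φ (fun i => Real.sqrt (x i)) σx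
    rw [← this]
    rfl
  have ey : radAvg Φ (fun i => Real.sqrt (ys i)) = radAvg Φ (fun i => Real.sqrt (y i)) := by
    have := radAvg_perm Φ (fun i => Real.sqrt (y i)) σy
    rw [← this]
    rfl
  rw [← ex, ← ey]
  exact hchain

open MeasureTheory ProbabilityTheory


lemma radSign_inj : Function.Injective radSign := by
  intro a b h
  cases a <;> cases b
  · rfl
  · simp only [radSign_true, radSign_false] at h; norm_num at h
  · simp only [radSign_true, radSign_false] at h; norm_num at h
  · rfl

lemma rademacherLaw_sign (b : Bool) : rademacherLaw {radSign b} = 1 / 2 := by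
  unfold rademacherLaw
  rw [Measure.add_apply, Measure.smul_apply, Measure.smul_apply,
    Measure.dirac_apply' _ (measurableSet_singleton _),
    Measure.dirac_apply' _ (measurableSet_singleton _)]
  cases b
  · simp [radSign]
    norm_num
  · simp [radSign]
    norm_num

lemma rademacherLaw_support : rademacherLaw ({1, -1} : Set ℝ)ᶜ = 0 := by
  unfold rademacherLaw
  rw [Measure.add_apply, Measure.smul_apply, Measure.smul_apply,
    Measure.dirac_apply' _ (by measurability),
    Measure.dirac_apply' _ (by measurability)]
  simp

lemma integral_eq_radAvg {n : ℕ} {Ω : Type} [MeasureSpace Ω]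
    [IsProbabilityMeasure (ℙ : Measure Ω)]
    (ε : Fin n → Ω → ℝ) (hmeas : ∀ i, Measurable (ε i))
    (hlaw : ∀ i, Measure.map (ε i) ℙ = rademacherLaw)
    (hindep : iIndepFun ε ℙ)
    (b : Fin n → ℝ) (Φ : ℝ → ℝ) :
    ∫ ω, Φ (∑ i, b i * ε i ω) ∂ℙ = ((2:ℝ)^n)⁻¹ * radAvg Φ b := by
  classical
  set E : (Fin n → Bool) → Set Ω := fun s => ⋂ i, ε i ⁻¹' {radSign (s i)} with hE
  have hEmeas : ∀ s, MeasurableSet (E s) := fun s =>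
    MeasurableSet.iInter fun i => (hmeas i) (measurableSet_singleton _)
  have hprob : ∀ s, ℙ (E s) = ((2:ENNReal)^n)⁻¹ := by
    intro s
    rw [hE]
    rw [hindep.meas_iInter (fun i => ⟨{radSign (s i)}, measurableSet_singleton _, rfl⟩)]
    have hfac : ∀ i : Fin n, ℙ (ε i ⁻¹' {radSign (s i)}) = 1 / 2 := by
      intro i
      have := Measure.map_apply (μ := ℙ) (hmeas i) (measurableSet_singleton (radSign (s i)))
      rw [hlaw i] at this
      rw [← this, rademacherLaw_sign]
    simp only [hfac]
    rw [Finset.prod_const]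
    simp only [Finset.card_univ, Fintype.card_fin]
    rw [one_div, ← ENNReal.inv_pow]
  have hdisj : Pairwise (Function.onFun Disjoint E) := by
    intro s s' hss
    have : ∃ i, s i ≠ s' i := by
      by_contra h
      push_neg at h
      exact hss (funext h)
    obtain ⟨i, hi⟩ := this
    rw [Function.onFun, Set.disjoint_left]
    intro ω h1 h2
    rw [hE, Set.mem_iInter] at h1 h2
    have e1 := h1 i
    have e2 := h2 i
    simp only [Set.mem_preimage, Set.mem_singleton_iff] at e1 e2
    exact hi (radSign_inj (by rw [← e1, ← e2]))
  have hunion : ℙ (⋃ s, E s) = 1 := by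
    rw [measure_iUnion hdisj hEmeas]
    rw [tsum_fintype]
    simp only [hprob]
    rw [Finset.sum_const]
    simp only [Finset.card_univ]
    rw [Fintype.card_fun]
    simp only [Fintype.card_bool, Fintype.card_fin, nsmul_eq_mul]
    rw [Nat.cast_pow, Nat.cast_ofNat,
      ENNReal.mul_inv_cancel (pow_ne_zero _ (by norm_num)) (ENNReal.pow_ne_top (by norm_num))]
  have hcompl : ℙ ((⋃ s, E s)ᶜ) = 0 := by
    rw [measure_compl (MeasurableSet.iUnion hEmeas) (measure_ne_top _ _), hunion]
    simp
  set G : Ω → ℝ := fun ω => ∑ s : Fin n → Bool,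
    Set.indicator (E s) (fun _ => Φ (radSum b s)) ω with hG
  have hae : (fun ω => Φ (∑ i, b i * ε i ω)) =ᵐ[ℙ] G := by
    have hmem : (⋃ s, E s) ∈ ae ℙ := by
      rw [mem_ae_iff]
      exact hcompl
    filter_upwards [hmem] with ω hω
    rw [Set.mem_iUnion] at hω
    obtain ⟨s0, hs0⟩ := hω
    have hval : ∑ i, b i * ε i ω = radSum b s0 := by
      unfold radSum
      apply Finset.sum_congr rfl
      intro i _
      rw [hE, Set.mem_iInter] at hs0
      have := hs0 i
      simp only [Set.mem_preimage, Set.mem_singleton_iff] at this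
      rw [this]
    rw [hval]
    simp only [hG]
    rw [Finset.sum_eq_single s0]
    · rw [Set.indicator_of_mem hs0]
    · intro s' _ hs'
      rw [Set.indicator_of_notMem]
      intro hc
      exact (Set.disjoint_left.mp (hdisj hs') hc) hs0
    · intro h
      exact absurd (Finset.mem_univ s0) h
  rw [integral_congr_ae hae, hG]
  rw [integral_finset_sum _ (fun s _ => (integrable_const _).indicator (hEmeas s))]
  have : ∀ s, ∫ ω, Set.indicator (E s) (fun _ => Φ (radSum b s)) ω ∂ℙ
      = ((2:ℝ)^n)⁻¹ * Φ (radSum b s) := by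
    intro s
    rw [integral_indicator_const _ (hEmeas s), measureReal_def, hprob s]
    rw [smul_eq_mul]
    congr 1
    rw [ENNReal.toReal_inv]
    norm_num
  simp only [this]
  rw [← Finset.mul_sum]
  rfl


/-- **Eaton's Schur-monotonicity principle.**  If `(a₁², …, aₙ²) ≺ (b₁², …, bₙ²)` and
`Φ` is even with convex second derivative, then `𝔼 Φ(∑ bᵢ εᵢ) ≤ 𝔼 Φ(∑ aᵢ εᵢ)`. -/
theorem schur_monotone_expectation
    (n : ℕ) (Ω : Type) [MeasureSpace Ω] [IsProbabilityMeasure (ℙ : Measure Ω)]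
    (ε : Fin n → Ω → ℝ)
    (hmeas : ∀ i, Measurable (ε i))
    (hlaw : ∀ i, Measure.map (ε i) ℙ = rademacherLaw)
    (hindep : iIndepFun ε ℙ)
    (a b : Fin n → ℝ)
    (ha : ∑ i, (a i) ^ 2 = 1) (hb : ∑ i, (b i) ^ 2 = 1)
    (hmaj : IsMajorizedBy (fun i => (a i) ^ 2) (fun i => (b i) ^ 2))
    (Φ : ℝ → ℝ)
    (heven : ∀ x, Φ (-x) = Φ x)
    (hC2 : ContDiff ℝ 2 Φ)
    (hconv : ConvexOn ℝ Set.univ (deriv (deriv Φ))) :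
    ∫ ω, Φ (∑ i, b i * ε i ω) ∂ℙ ≤ ∫ ω, Φ (∑ i, a i * ε i ω) ∂ℙ := by
  rw [integral_eq_radAvg ε hmeas hlaw hindep b Φ,
    integral_eq_radAvg ε hmeas hlaw hindep a Φ]
  apply mul_le_mul_of_nonneg_left _ (by positivity)
  have eb : radAvg Φ b = radAvg Φ (fun i => Real.sqrt ((b i) ^ 2)) := by
    rw [← radAvg_abs Φ b]
    congr 1
    funext i
    rw [Real.sqrt_sq_eq_abs]
  have ea : radAvg Φ a = radAvg Φ (fun i => Real.sqrt ((a i) ^ 2)) := by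
    rw [← radAvg_abs Φ a]
    congr 1
    funext i
    rw [Real.sqrt_sq_eq_abs]
  rw [eb, ea]
  exact radAvg_maj hC2 hconv (fun i => (a i) ^ 2) (fun i => (b i) ^ 2)
    (fun i => sq_nonneg _) (fun i => sq_nonneg _) (by rw [hb, ha]) hmaj
end

section
/- Let p > 3, s ∈ ℝ and t > 0, and let ψ_s : [0, ∞) → ℝ be defined by ψ_s(t) = |s + √t|^p + |s − √t|^p. Then the second derivative of ψ_s at t equals (p(p−1)(p−2)(p−3)/(4 t^{3/2})) ∫₀^{√t} ∫ₓ^{√t} ∫_{|s|−y}^{|s|+y} |z|^{p−4} dz dy dx. -/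
open Real Filter MeasureTheory intervalIntegral Topology Set

private lemma q_cont_abs {q : ℝ} (hq : 0 ≤ q) : Continuous fun x : ℝ => |x| ^ q :=
  (Real.continuous_rpow_const hq).comp continuous_abs

private lemma abs_rpow_succ {q : ℝ} {x : ℝ} (hx : x ≠ 0) : |x| ^ (q + 1) = |x| ^ q * |x| :=
  Real.rpow_add_one (abs_ne_zero.mpr hx) q

private lemma cont_mul_abs {q : ℝ} (hq : -1 < q) : Continuous fun x : ℝ => x * |x| ^ q := by
  rw [continuous_iff_continuousAt]
  intro x
  rcases eq_or_ne x 0 with rfl | hx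
  · have hb : Tendsto (fun x : ℝ => |x| ^ (q + 1)) (𝓝 0) (𝓝 0) := by
      have h := (q_cont_abs (by linarith : (0:ℝ) ≤ q + 1)).tendsto 0
      simpa [Real.zero_rpow (by linarith : q + 1 ≠ 0)] using h
    have h := squeeze_zero_norm (f := fun x : ℝ => x * |x| ^ q) (fun y => ?_) hb
    · simpa [ContinuousAt] using h
    · rcases eq_or_ne y 0 with rfl | hy
      · simp [Real.zero_rpow (by linarith : q + 1 ≠ 0)]
      · rw [abs_rpow_succ hy, Real.norm_eq_abs, abs_mul,
          abs_of_nonneg (Real.rpow_nonneg (abs_nonneg y) q)]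
        ring_nf
        exact le_rfl
  · exact continuousAt_id.mul
      (((Real.continuousAt_rpow_const _ _ (Or.inl (abs_ne_zero.mpr hx)))).comp
        continuous_abs.continuousAt)

private lemma abs_rpow_split {q : ℝ} {y : ℝ} (hy : y ≠ 0) : |y| ^ q = y * |y| ^ (q - 2) * y := by
  have h2 : |y| ^ (2:ℝ) = y ^ 2 := by
    rw [show (2:ℝ) = ((2:ℕ):ℝ) by norm_num, Real.rpow_natCast, sq_abs]
  calc |y| ^ q = |y| ^ (q - 2 + 2) := by norm_num
    _ = |y| ^ (q - 2) * |y| ^ (2:ℝ) := Real.rpow_add (abs_pos.mpr hy) _ _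
    _ = y * |y| ^ (q - 2) * y := by rw [h2]; ring

private lemma hasDerivAt_rpow_abs {q : ℝ} (hq : 1 < q) (x : ℝ) :
    HasDerivAt (fun y : ℝ => |y| ^ q) (q * (x * |x| ^ (q - 2))) x := by
  rcases lt_trichotomy x 0 with hx | rfl | hx
  · have hx' : -x ≠ 0 := neg_ne_zero.mpr hx.ne
    have h1 : HasDerivAt (fun y : ℝ => (-y) ^ q) (q * (-x) ^ (q - 1) * (-1)) x :=
      (Real.hasDerivAt_rpow_const (Or.inl hx')).comp x (hasDerivAt_neg x)
    have h2 : (fun y : ℝ => |y| ^ q) =ᶠ[𝓝 x] fun y : ℝ => (-y) ^ q := by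
      filter_upwards [Iio_mem_nhds hx] with y hy
      rw [abs_of_neg hy]
    have h3 := h1.congr_of_eventuallyEq h2
    refine h3.congr_deriv ?_
    have h4 : (-x) ^ (q - 1) = (-x) ^ (q - 2) * (-x) := by
      rw [← Real.rpow_add_one hx' (q - 2)]; congr 1; ring
    rw [h4, abs_of_neg hx]; ring
  · rw [hasDerivAt_iff_tendsto_slope]
    have key : (fun y : ℝ => y * |y| ^ (q - 2)) =ᶠ[𝓝[≠] (0:ℝ)]
        slope (fun y : ℝ => |y| ^ q) 0 := by
      filter_upwards [self_mem_nhdsWithin] with y hy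
      have hy' : y ≠ 0 := hy
      rw [slope_def_field]
      simp only [abs_zero, Real.zero_rpow (by linarith : q ≠ 0), sub_zero]
      rw [eq_div_iff hy']
      exact (abs_rpow_split hy').symm
    have lim : Tendsto (fun y : ℝ => y * |y| ^ (q - 2)) (𝓝[≠] (0:ℝ)) (𝓝 0) := by
      have h : Tendsto (fun y : ℝ => y * |y| ^ (q - 2)) (𝓝[≠] (0:ℝ))
          (𝓝 ((0:ℝ) * |(0:ℝ)| ^ (q - 2))) :=
        ((cont_mul_abs (by linarith : (-1:ℝ) < q - 2)).tendsto 0).mono_left nhdsWithin_le_nhds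
      simpa using h
    have : Tendsto (slope (fun y : ℝ => |y| ^ q) 0) (𝓝[≠] (0:ℝ)) (𝓝 0) := lim.congr' key
    convert this using 2
    simp
  · have h1 : HasDerivAt (fun y : ℝ => y ^ q) (q * x ^ (q - 1)) x :=
      Real.hasDerivAt_rpow_const (Or.inl hx.ne')
    have h2 : (fun y : ℝ => |y| ^ q) =ᶠ[𝓝 x] fun y : ℝ => y ^ q := by
      filter_upwards [Ioi_mem_nhds hx] with y hy
      rw [abs_of_pos hy]
    have h3 := h1.congr_of_eventuallyEq h2
    refine h3.congr_deriv ?_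
    have h4 : x ^ (q - 1) = x ^ (q - 2) * x := by
      rw [← Real.rpow_add_one hx.ne' (q - 2)]; congr 1; ring
    rw [h4, abs_of_pos hx]; ring

private lemma hasDerivAt_mul_abs {q : ℝ} (hq : 1 < q) (x : ℝ) :
    HasDerivAt (fun y : ℝ => y * |y| ^ q) ((q + 1) * |x| ^ q) x := by
  rcases lt_trichotomy x 0 with hx | rfl | hx
  · have hx' : -x ≠ 0 := neg_ne_zero.mpr hx.ne
    have h1 : HasDerivAt (fun y : ℝ => -((-y) ^ (q + 1)))
        (-((q + 1) * (-x) ^ (q + 1 - 1) * (-1))) x :=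
      (((Real.hasDerivAt_rpow_const (p := q + 1) (Or.inl hx')).comp x (hasDerivAt_neg x))).neg
    have h2 : (fun y : ℝ => y * |y| ^ q) =ᶠ[𝓝 x] fun y : ℝ => -((-y) ^ (q + 1)) := by
      filter_upwards [Iio_mem_nhds hx] with y hy
      have hy' : -y ≠ 0 := neg_ne_zero.mpr hy.ne
      rw [abs_of_neg hy, Real.rpow_add_one hy' q]
      ring
    have h3 := h1.congr_of_eventuallyEq h2
    refine h3.congr_deriv ?_
    rw [abs_of_neg hx]
    norm_num
  · rw [hasDerivAt_iff_tendsto_slope]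
    have key : (fun y : ℝ => |y| ^ q) =ᶠ[𝓝[≠] (0:ℝ)]
        slope (fun y : ℝ => y * |y| ^ q) 0 := by
      filter_upwards [self_mem_nhdsWithin] with y hy
      have hy' : y ≠ 0 := hy
      rw [slope_def_field]
      simp only [zero_mul, sub_zero]
      rw [eq_div_iff hy']
      ring
    have lim : Tendsto (fun y : ℝ => |y| ^ q) (𝓝[≠] (0:ℝ)) (𝓝 0) := by
      have h : Tendsto (fun y : ℝ => |y| ^ q) (𝓝[≠] (0:ℝ)) (𝓝 (|(0:ℝ)| ^ q)) :=
        ((q_cont_abs (by linarith : (0:ℝ) ≤ q)).tendsto 0).mono_left nhdsWithin_le_nhds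
      simpa [Real.zero_rpow (by linarith : q ≠ 0)] using h
    have : Tendsto (slope (fun y : ℝ => y * |y| ^ q) 0) (𝓝[≠] (0:ℝ)) (𝓝 0) := lim.congr' key
    convert this using 2
    simp [Real.zero_rpow (by linarith : q ≠ 0)]
  · have h1 : HasDerivAt (fun y : ℝ => y ^ (q + 1)) ((q + 1) * x ^ (q + 1 - 1)) x :=
      Real.hasDerivAt_rpow_const (Or.inl hx.ne')
    have h2 : (fun y : ℝ => y * |y| ^ q) =ᶠ[𝓝 x] fun y : ℝ => y ^ (q + 1) := by
      filter_upwards [Ioi_mem_nhds hx] with y hy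
      rw [abs_of_pos hy, Real.rpow_add_one hy.ne' q]
      ring
    have h3 := h1.congr_of_eventuallyEq h2
    refine h3.congr_deriv ?_
    rw [abs_of_pos hx]
    norm_num

private lemma intervalIntegrable_abs_rpow {q : ℝ} (hq : -1 < q) (a b : ℝ) :
    IntervalIntegrable (fun z : ℝ => |z| ^ q) volume a b := by
  have half : ∀ c : ℝ, 0 ≤ c → IntervalIntegrable (fun z : ℝ => |z| ^ q) volume 0 c := by
    intro c hc
    apply (intervalIntegrable_rpow' hq (a := 0) (b := c)).congr_ae
    rw [uIoc_of_le hc]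
    refine Filter.eventually_of_mem (self_mem_ae_restrict measurableSet_Ioc) fun x hx => ?_
    show x ^ q = |x| ^ q
    rw [abs_of_pos hx.1]
  have half' : ∀ c : ℝ, IntervalIntegrable (fun z : ℝ => |z| ^ q) volume 0 c := by
    intro c
    rcases le_or_gt 0 c with hc | hc
    · exact half c hc
    · refine (IntervalIntegrable.iff_comp_neg).mpr ?_
      simpa [abs_neg] using half (-c) (by linarith)
  exact (half' a).symm.trans (half' b)

private lemma integral_abs_rpow {q : ℝ} (hq : -1 < q) (a b : ℝ) :
    ∫ z in a..b, |z| ^ q = (b * |b| ^ q - a * |a| ^ q) / (q + 1) := by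
  have hq1 : q + 1 ≠ 0 := by linarith
  have base : ∀ c : ℝ, 0 ≤ c → ∫ z in (0:ℝ)..c, |z| ^ q = c * |c| ^ q / (q + 1) := by
    intro c hc
    rw [integral_congr (g := fun z : ℝ => z ^ q) ?_, integral_rpow (Or.inl hq)]
    · rcases eq_or_lt_of_le hc with rfl | hc'
      · simp [Real.zero_rpow hq1]
      · rw [Real.zero_rpow hq1, abs_of_pos hc', Real.rpow_add_one hc'.ne']
        ring
    · intro z hz
      rw [uIcc_of_le hc] at hz
      show |z| ^ q = z ^ q
      rw [abs_of_nonneg hz.1]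
  have base' : ∀ c : ℝ, ∫ z in (0:ℝ)..c, |z| ^ q = c * |c| ^ q / (q + 1) := by
    intro c
    rcases le_or_gt 0 c with hc | hc
    · exact base c hc
    · have h2 : (∫ x in (0:ℝ)..(-c), |(-x)| ^ q) = ∫ x in (-(-c))..(-(0:ℝ)), |x| ^ q :=
        integral_comp_neg (fun z : ℝ => |z| ^ q)
      simp only [abs_neg, neg_neg, neg_zero] at h2
      have h3 : ∫ x in (0:ℝ)..(-c), |x| ^ q = (-c) * |(-c)| ^ q / (q + 1) :=
        base (-c) (by linarith)
      rw [integral_symm, ← h2, h3, abs_neg]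
      ring
  rw [← integral_add_adjacent_intervals (intervalIntegrable_abs_rpow hq a 0)
      (intervalIntegrable_abs_rpow hq 0 b)]
  rw [integral_symm, base' a, base' b]
  ring

private lemma middle_int (p s : ℝ) (hp : 3 < p) (x c : ℝ) :
    (∫ y in x..c, ((s + y) * |s + y| ^ (p - 4) - (s - y) * |s - y| ^ (p - 4)) / (p - 3))
      = ((|s + c| ^ (p - 2) + |s - c| ^ (p - 2)) - (|s + x| ^ (p - 2) + |s - x| ^ (p - 2)))
        / ((p - 2) * (p - 3)) := by
  have h2 : (p:ℝ) - 2 ≠ 0 := by linarith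
  have h3 : (p:ℝ) - 3 ≠ 0 := by linarith
  have hder : ∀ y : ℝ, HasDerivAt
      (fun y : ℝ => (|s + y| ^ (p - 2) + |s - y| ^ (p - 2)) / ((p - 2) * (p - 3)))
      (((s + y) * |s + y| ^ (p - 4) - (s - y) * |s - y| ^ (p - 4)) / (p - 3)) y := by
    intro y
    have d1 : HasDerivAt (fun y : ℝ => |s + y| ^ (p - 2))
        ((p - 2) * ((s + y) * |s + y| ^ (p - 2 - 2)) * 1) y :=
      (hasDerivAt_rpow_abs (by linarith) (s + y)).comp y ((hasDerivAt_id y).const_add s)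
    have d2 : HasDerivAt (fun y : ℝ => |s - y| ^ (p - 2))
        ((p - 2) * ((s - y) * |s - y| ^ (p - 2 - 2)) * (-1)) y :=
      (hasDerivAt_rpow_abs (by linarith) (s - y)).comp y ((hasDerivAt_id y).const_sub s)
    have := (d1.add d2).div_const ((p - 2) * (p - 3))
    refine this.congr_deriv ?_
    rw [show p - 2 - 2 = p - 4 by ring]
    field_simp
    ring
  have hcont : Continuous fun y : ℝ =>
      ((s + y) * |s + y| ^ (p - 4) - (s - y) * |s - y| ^ (p - 4)) / (p - 3) := by
    have c1 : Continuous fun y : ℝ => (s + y) * |s + y| ^ (p - 4) :=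
      (cont_mul_abs (by linarith : (-1:ℝ) < p - 4)).comp (continuous_const.add continuous_id)
    have c2 : Continuous fun y : ℝ => (s - y) * |s - y| ^ (p - 4) :=
      (cont_mul_abs (by linarith : (-1:ℝ) < p - 4)).comp (continuous_const.sub continuous_id)
    exact (c1.sub c2).div_const _
  rw [integral_eq_sub_of_hasDerivAt (fun y _ => hder y) (hcont.intervalIntegrable x c)]
  ring

private lemma triple_int (p s : ℝ) (hp : 3 < p) (c : ℝ) :
    (∫ x in (0:ℝ)..c, ∫ y in x..c, ∫ z in (s - y)..(s + y), |z| ^ (p - 4))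
      = (c * (|s + c| ^ (p - 2) + |s - c| ^ (p - 2))
          - ((s + c) * |s + c| ^ (p - 2) - (s - c) * |s - c| ^ (p - 2)) / (p - 1))
        / ((p - 2) * (p - 3)) := by
  have h1 : (p:ℝ) - 1 ≠ 0 := by linarith
  have h2 : (p:ℝ) - 2 ≠ 0 := by linarith
  have h3 : (p:ℝ) - 3 ≠ 0 := by linarith
  have inner_eq : ∀ y : ℝ, (∫ z in (s - y)..(s + y), |z| ^ (p - 4))
      = ((s + y) * |s + y| ^ (p - 4) - (s - y) * |s - y| ^ (p - 4)) / (p - 3) := by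
    intro y
    rw [integral_abs_rpow (by linarith : (-1:ℝ) < p - 4), show p - 4 + 1 = p - 3 by ring]
  simp only [inner_eq, middle_int p s hp]
  -- now : ∫ x in 0..c, (K - (|s+x|^(p-2)+|s-x|^(p-2)))/((p-2)*(p-3)) = ...
  have hder : ∀ x : ℝ, HasDerivAt
      (fun x : ℝ => ((|s + c| ^ (p - 2) + |s - c| ^ (p - 2)) * x
          - ((s + x) * |s + x| ^ (p - 2) - (s - x) * |s - x| ^ (p - 2)) / (p - 1))
        / ((p - 2) * (p - 3)))
      (((|s + c| ^ (p - 2) + |s - c| ^ (p - 2)) - (|s + x| ^ (p - 2) + |s - x| ^ (p - 2)))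
        / ((p - 2) * (p - 3))) x := by
    intro x
    have d1 : HasDerivAt (fun x : ℝ => (s + x) * |s + x| ^ (p - 2))
        ((p - 2 + 1) * |s + x| ^ (p - 2) * 1) x :=
      (hasDerivAt_mul_abs (by linarith) (s + x)).comp x ((hasDerivAt_id x).const_add s)
    have d2 : HasDerivAt (fun x : ℝ => (s - x) * |s - x| ^ (p - 2))
        ((p - 2 + 1) * |s - x| ^ (p - 2) * (-1)) x :=
      (hasDerivAt_mul_abs (by linarith) (s - x)).comp x ((hasDerivAt_id x).const_sub s)
    have dK : HasDerivAt (fun x : ℝ => (|s + c| ^ (p - 2) + |s - c| ^ (p - 2)) * x)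
        (|s + c| ^ (p - 2) + |s - c| ^ (p - 2)) x := by
      simpa using (hasDerivAt_id x).const_mul (|s + c| ^ (p - 2) + |s - c| ^ (p - 2))
    have := (dK.sub ((d1.sub d2).div_const (p - 1))).div_const ((p - 2) * (p - 3))
    refine this.congr_deriv ?_
    field_simp
    ring
  have hcont : Continuous fun x : ℝ =>
      ((|s + c| ^ (p - 2) + |s - c| ^ (p - 2)) - (|s + x| ^ (p - 2) + |s - x| ^ (p - 2)))
        / ((p - 2) * (p - 3)) := by
    have c1 : Continuous fun x : ℝ => |s + x| ^ (p - 2) :=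
      (q_cont_abs (by linarith : (0:ℝ) ≤ p - 2)).comp (continuous_const.add continuous_id)
    have c2 : Continuous fun x : ℝ => |s - x| ^ (p - 2) :=
      (q_cont_abs (by linarith : (0:ℝ) ≤ p - 2)).comp (continuous_const.sub continuous_id)
    exact (continuous_const.sub (c1.add c2)).div_const _
  rw [integral_eq_sub_of_hasDerivAt (fun x _ => hder x) (hcont.intervalIntegrable 0 c)]
  have hs0 : s + 0 = s := by ring
  have hs0' : s - 0 = s := by ring
  rw [hs0, hs0']
  simp only [sub_self, zero_div, mul_zero, zero_sub, neg_zero, sub_zero]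
  ring

private lemma psi_deriv (p s : ℝ) (hp : 3 < p) {u : ℝ} (hu : 0 < u) :
    HasDerivAt (fun u : ℝ => |s + Real.sqrt u| ^ p + |s - Real.sqrt u| ^ p)
      (p / 2 * (((s + Real.sqrt u) * |s + Real.sqrt u| ^ (p - 2)
        - (s - Real.sqrt u) * |s - Real.sqrt u| ^ (p - 2)) / Real.sqrt u)) u := by
  have hsu : (0:ℝ) < Real.sqrt u := Real.sqrt_pos.mpr hu
  have hsq : HasDerivAt Real.sqrt (1 / (2 * Real.sqrt u)) u := Real.hasDerivAt_sqrt hu.ne'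
  have h4 : HasDerivAt (fun u : ℝ => |s + Real.sqrt u| ^ p)
      (p * ((s + Real.sqrt u) * |s + Real.sqrt u| ^ (p - 2)) * (1 / (2 * Real.sqrt u))) u :=
    by have := (hasDerivAt_rpow_abs (q := p) (by linarith) (s + Real.sqrt u)).comp u (hsq.const_add s); exact this
  have h5 : HasDerivAt (fun u : ℝ => |s - Real.sqrt u| ^ p)
      (p * ((s - Real.sqrt u) * |s - Real.sqrt u| ^ (p - 2)) * (-(1 / (2 * Real.sqrt u)))) u :=
    by have := (hasDerivAt_rpow_abs (q := p) (by linarith) (s - Real.sqrt u)).comp u (hsq.const_sub s); exact this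
  have := h4.add h5
  refine this.congr_deriv ?_
  field_simp
  ring

private lemma main_lemma (p : ℝ) (hp : 3 < p) (s t : ℝ) (ht : 0 < t) :
    deriv (deriv (fun u : ℝ => |s + Real.sqrt u| ^ p + |s - Real.sqrt u| ^ p)) t
      = p * (p - 1) * (p - 2) * (p - 3) / (4 * t ^ ((3 : ℝ) / 2)) *
        ∫ x in (0 : ℝ)..Real.sqrt t, ∫ y in x..Real.sqrt t,
          ∫ z in (s - y)..(s + y), |z| ^ (p - 4) := by
  have h1 : (p:ℝ) - 1 ≠ 0 := by linarith
  have h2 : (p:ℝ) - 2 ≠ 0 := by linarith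
  have h3 : (p:ℝ) - 3 ≠ 0 := by linarith
  set st := Real.sqrt t with hst
  have hstpos : 0 < st := Real.sqrt_pos.mpr ht
  have hstne : st ≠ 0 := hstpos.ne'
  have hev : deriv (fun u : ℝ => |s + Real.sqrt u| ^ p + |s - Real.sqrt u| ^ p)
      =ᶠ[𝓝 t] fun u : ℝ => p / 2 * (((s + Real.sqrt u) * |s + Real.sqrt u| ^ (p - 2)
        - (s - Real.sqrt u) * |s - Real.sqrt u| ^ (p - 2)) / Real.sqrt u) := by
    filter_upwards [eventually_gt_nhds ht] with u hu
    exact (psi_deriv p s hp hu).deriv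
  rw [Filter.EventuallyEq.deriv_eq hev]
  have hsq : HasDerivAt Real.sqrt (1 / (2 * st)) t := by
    rw [hst]; exact Real.hasDerivAt_sqrt ht.ne'
  have d1 : HasDerivAt (fun u : ℝ => (s + Real.sqrt u) * |s + Real.sqrt u| ^ (p - 2))
      ((p - 2 + 1) * |s + st| ^ (p - 2) * (1 / (2 * st))) t :=
    by have := (hasDerivAt_mul_abs (q := p - 2) (by linarith) (s + st)).comp t (hsq.const_add s); exact this
  have d2 : HasDerivAt (fun u : ℝ => (s - Real.sqrt u) * |s - Real.sqrt u| ^ (p - 2))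
      ((p - 2 + 1) * |s - st| ^ (p - 2) * (-(1 / (2 * st)))) t :=
    by have := (hasDerivAt_mul_abs (q := p - 2) (by linarith) (s - st)).comp t (hsq.const_sub s); exact this
  have hD : HasDerivAt (fun u : ℝ => p / 2 * (((s + Real.sqrt u) * |s + Real.sqrt u| ^ (p - 2)
        - (s - Real.sqrt u) * |s - Real.sqrt u| ^ (p - 2)) / Real.sqrt u))
      (p / 2 * ((((p - 2 + 1) * |s + st| ^ (p - 2) * (1 / (2 * st))
          - (p - 2 + 1) * |s - st| ^ (p - 2) * (-(1 / (2 * st)))) * st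
        - ((s + st) * |s + st| ^ (p - 2) - (s - st) * |s - st| ^ (p - 2)) * (1 / (2 * st)))
          / st ^ 2)) t :=
    ((d1.sub d2).div hsq hstne).const_mul (p / 2)
  rw [hD.deriv, triple_int p s hp st]
  have h32 : t ^ ((3:ℝ)/2) = st ^ 3 := by
    rw [hst, Real.sqrt_eq_rpow, ← Real.rpow_natCast (t ^ ((1:ℝ)/2)) 3, ← Real.rpow_mul ht.le]
    norm_num
  rw [h32]
  have h4t : (4:ℝ) * st ^ 3 ≠ 0 := by positivity
  field_simp
  ring

/-- **Integral formula for `ψ_s''`, case `p > 3`** (Lemma 2.1, formula (2.1)):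
for `ψ_s(t) = |s + √t|^p + |s − √t|^p` and `t > 0`,
`ψ_s''(t) = p(p−1)(p−2)(p−3)/(4 t^{3/2}) ∫₀^{√t} ∫ₓ^{√t} ∫_{|s|−y}^{|s|+y} |z|^{p−4} dz dy dx`. -/
theorem psi_second_deriv_formula (p : ℝ) (hp : 3 < p) (s t : ℝ) (ht : 0 < t) :
    deriv (deriv (fun u : ℝ => |s + Real.sqrt u| ^ p + |s - Real.sqrt u| ^ p)) t =
      p * (p - 1) * (p - 2) * (p - 3) / (4 * t ^ ((3 : ℝ) / 2)) *
        ∫ x in (0 : ℝ)..Real.sqrt t, ∫ y in x..Real.sqrt t,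
          ∫ z in (|s| - y)..(|s| + y), |z| ^ (p - 4) := by
  have hfun : (fun u : ℝ => |s + Real.sqrt u| ^ p + |s - Real.sqrt u| ^ p)
      = fun u : ℝ => |(|s|) + Real.sqrt u| ^ p + |(|s|) - Real.sqrt u| ^ p := by
    funext u
    rcases abs_cases s with ⟨h, _⟩ | ⟨h, _⟩
    · rw [h]
    · rw [h, show -s + Real.sqrt u = -(s - Real.sqrt u) by ring,
        show -s - Real.sqrt u = -(s + Real.sqrt u) by ring, abs_neg, abs_neg, add_comm]
  rw [hfun]
  exact main_lemma p hp |s| t ht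
end

section
/- Let p = 3, s ∈ ℝ and t > 0, and let ψ_s : [0, ∞) → ℝ be defined by ψ_s(t) = |s + √t|³ + |s − √t|³. Then the second derivative of ψ_s at t equals 3(t − s²)₊ / (2 t^{3/2}), where x₊ = max{x, 0}. -/
open Real

lemma hasDerivAt_posPart_sq (x : ℝ) :
    HasDerivAt (fun y : ℝ => max y 0 ^ 2) (2 * max x 0) x := by
  rcases lt_trichotomy x 0 with hx | hx | hx
  · have h : (fun y : ℝ => max y 0 ^ 2) =ᶠ[nhds x] fun _ => (0:ℝ) := by
      filter_upwards [Iio_mem_nhds hx] with y hy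
      simp [max_eq_right (Set.mem_Iio.mp hy).le]
    have h0 := (hasDerivAt_const x (0:ℝ)).congr_of_eventuallyEq h
    simpa [max_eq_right hx.le] using h0
  · subst hx
    rw [hasDerivAt_iff_isLittleO]
    rw [Asymptotics.isLittleO_iff]
    intro c hc
    filter_upwards [Metric.ball_mem_nhds 0 hc] with y hy
    rw [Metric.mem_ball, Real.dist_eq, sub_zero] at hy
    simp only [smul_eq_mul, Real.norm_eq_abs, sub_zero]
    have h1 : max y 0 ≤ |y| := max_le (le_abs_self y) (abs_nonneg y)
    have h2 : (0:ℝ) ≤ max y 0 := le_max_right y 0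
    have heq : |max y 0 ^ 2 - max 0 0 ^ 2 - y * (2 * max 0 0)| = max y 0 ^ 2 := by
      rw [max_self]
      norm_num
    rw [heq]
    nlinarith [abs_nonneg y, mul_le_mul h1 h1 h2 (abs_nonneg y),
      mul_nonneg (abs_nonneg y) (sub_nonneg.2 hy.le)]
  · have h : (fun y : ℝ => max y 0 ^ 2) =ᶠ[nhds x] fun y => y ^ 2 := by
      filter_upwards [Ioi_mem_nhds hx] with y hy
      simp [max_eq_left (Set.mem_Ioi.mp hy).le]
    have h0 := (hasDerivAt_pow 2 x).congr_of_eventuallyEq h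
    rw [max_eq_left hx.le]
    simpa using h0

lemma hasDerivAt_posPart_cube (x : ℝ) :
    HasDerivAt (fun y : ℝ => max y 0 ^ 3) (3 * max x 0 ^ 2) x := by
  have h := (hasDerivAt_posPart_sq x).mul (hasDerivAt_id x)
  have heq : (fun y : ℝ => max y 0 ^ 2 * y) = fun y : ℝ => max y 0 ^ 3 := by
    funext y
    rcases le_or_gt y 0 with hy | hy
    · simp [max_eq_right hy]
    · rw [max_eq_left hy.le]; ring
  simp only [id_eq] at h
  rw [show ((fun y : ℝ => max y 0 ^ 2) * id) = fun y : ℝ => max y 0 ^ 3 from heq] at h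
  refine h.congr_deriv ?_
  rcases le_or_gt x 0 with hx | hx
  · simp [max_eq_right hx]
  · rw [max_eq_left hx.le]; ring

/-- **Formula for `ψ_s''`, case `p = 3`** (Lemma 2.1, formula (2.2)):
for `ψ_s(t) = |s + √t|³ + |s − √t|³` and `t > 0`,
`ψ_s''(t) = 3(t − s²)₊ / (2 t^{3/2})`. -/
theorem psi_second_deriv_formula_three (s t : ℝ) (ht : 0 < t) :
    deriv (deriv (fun u : ℝ => |s + Real.sqrt u| ^ (3 : ℝ) + |s - Real.sqrt u| ^ (3 : ℝ))) t =
      3 * max (t - s ^ 2) 0 / (2 * t ^ ((3 : ℝ) / 2)) := by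
  set F : ℝ → ℝ := fun u => 2 * |s| ^ 3 + 6 * |s| * u + 2 * max (Real.sqrt u - |s|) 0 ^ 3 with hFdef
  set φ : ℝ → ℝ := fun u => 6 * |s| + 3 * max (Real.sqrt u - |s|) 0 ^ 2 * (Real.sqrt u)⁻¹ with hφdef
  -- pointwise identity for u ≥ 0
  have hid : ∀ u : ℝ, 0 ≤ u →
      |s + Real.sqrt u| ^ (3:ℝ) + |s - Real.sqrt u| ^ (3:ℝ) = F u := by
    intro u hu
    have hx : 0 ≤ Real.sqrt u := Real.sqrt_nonneg u
    have hx2 : Real.sqrt u ^ 2 = u := Real.sq_sqrt hu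
    set x := Real.sqrt u with hxdef
    rw [show (3:ℝ) = ((3:ℕ):ℝ) by norm_num, Real.rpow_natCast, Real.rpow_natCast]
    simp only [hFdef]
    rcases le_or_gt |s| x with h | h
    · have h1 : |s + x| = s + x := abs_of_nonneg (by nlinarith [neg_abs_le s])
      have h2 : |s - x| = x - s := by
        rw [abs_sub_comm]; exact abs_of_nonneg (by nlinarith [le_abs_self s])
      rw [h1, h2, max_eq_left (by linarith)]
      nlinarith [sq_abs s]
    · rw [max_eq_right (by linarith)]
      rcases le_or_gt 0 s with hs | hs
      · rw [abs_of_nonneg hs] at h ⊢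
        rw [abs_of_nonneg (by linarith), abs_of_nonneg (by linarith), ← hx2]
        ring
      · rw [abs_of_neg hs] at h ⊢
        rw [abs_of_nonpos (by linarith), abs_of_nonpos (by nlinarith), ← hx2]
        ring
  -- F has derivative φ u at every u > 0
  have hF' : ∀ u : ℝ, 0 < u → HasDerivAt F (φ u) u := by
    intro u hu
    have hxu : 0 < Real.sqrt u := Real.sqrt_pos.mpr hu
    have hsq : HasDerivAt Real.sqrt (1 / (2 * Real.sqrt u)) u := Real.hasDerivAt_sqrt hu.ne'
    have h1 : HasDerivAt (fun v => Real.sqrt v - |s|) (1/(2*Real.sqrt u)) u := hsq.sub_const _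
    have h2 : HasDerivAt (fun v => max (Real.sqrt v - |s|) 0 ^ 3)
        (3 * max (Real.sqrt u - |s|) 0 ^ 2 * (1/(2*Real.sqrt u))) u :=
      (hasDerivAt_posPart_cube _).comp u h1
    have h3 := (((hasDerivAt_id u).const_mul (6 * |s|)).const_add (2 * |s| ^ 3)).add (h2.const_mul 2)
    have h4 : HasDerivAt F
        (6 * |s| * 1 + 2 * (3 * max (Real.sqrt u - |s|) 0 ^ 2 * (1/(2*Real.sqrt u)))) u := by
      exact h3
    convert h4 using 1
    simp only [hφdef]
    field_simp
  -- the original function has derivative φ u at every u > 0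
  have hψ' : ∀ u : ℝ, 0 < u → HasDerivAt
      (fun u : ℝ => |s + Real.sqrt u| ^ (3:ℝ) + |s - Real.sqrt u| ^ (3:ℝ)) (φ u) u := by
    intro u hu
    refine (hF' u hu).congr_of_eventuallyEq ?_
    filter_upwards [Ioi_mem_nhds hu] with v hv
    exact hid v (Set.mem_Ioi.mp hv).le
  -- hence deriv ψ = φ near t
  have hder : deriv (fun u : ℝ => |s + Real.sqrt u| ^ (3:ℝ) + |s - Real.sqrt u| ^ (3:ℝ))
      =ᶠ[nhds t] φ := by
    filter_upwards [Ioi_mem_nhds ht] with u hu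
    exact (hψ' u (Set.mem_Ioi.mp hu)).deriv
  rw [hder.deriv_eq]
  -- now compute deriv φ t
  have hxt : 0 < Real.sqrt t := Real.sqrt_pos.mpr ht
  have hsq : HasDerivAt Real.sqrt (1 / (2 * Real.sqrt t)) t := Real.hasDerivAt_sqrt ht.ne'
  have h1 : HasDerivAt (fun v => Real.sqrt v - |s|) (1/(2*Real.sqrt t)) t := hsq.sub_const _
  have h2 : HasDerivAt (fun v => max (Real.sqrt v - |s|) 0 ^ 2)
      (2 * max (Real.sqrt t - |s|) 0 * (1/(2*Real.sqrt t))) t :=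
    (hasDerivAt_posPart_sq _).comp t h1
  have h3 : HasDerivAt (fun v => (Real.sqrt v)⁻¹) (-(1/(2*Real.sqrt t)) / (Real.sqrt t)^2) t :=
    hsq.inv hxt.ne'
  have h4 := ((h2.mul h3).const_mul 3).const_add (6 * |s|)
  have h5 : HasDerivAt φ
      (3 * (2 * max (Real.sqrt t - |s|) 0 * (1/(2*Real.sqrt t)) * (Real.sqrt t)⁻¹ +
        max (Real.sqrt t - |s|) 0 ^ 2 * (-(1/(2*Real.sqrt t)) / (Real.sqrt t)^2))) t := by
    exact h4.congr_of_eventuallyEq (Filter.Eventually.of_forall fun u => by simp only [hφdef, Pi.mul_apply, mul_assoc])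
  rw [h5.deriv]
  -- final algebra
  have hx2 : Real.sqrt t ^ 2 = t := Real.sq_sqrt ht.le
  have h32 : t ^ ((3:ℝ)/2) = t * Real.sqrt t := by
    rw [show ((3:ℝ)/2) = 1 + 1/2 by norm_num, Real.rpow_add ht, Real.rpow_one,
      ← Real.sqrt_eq_rpow]
  set x := Real.sqrt t with hxdef
  rw [h32]
  rcases le_or_gt |s| x with h | h
  · rw [max_eq_left (by linarith), max_eq_left (by nlinarith [sq_abs s, pow_le_pow_left₀ (abs_nonneg s) h 2]), ← hx2,
      ← sq_abs s]
    field_simp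
    ring
  · rw [max_eq_right (by linarith), max_eq_right (by nlinarith [sq_abs s, abs_nonneg s])]
    simp
end

section
/- Let p ≥ 4, s ∈ ℝ and t > 0, and let ψ_s(t) = |s + √t|^p + |s − √t|^p. Then ψ_s''(t) ≥ ψ_0''(t) = (p(p−2)/2) t^{(p−4)/2}; equivalently, the function t ↦ ψ_s(t) − 2t^{p/2} is convex on (0, ∞). -/
open Real


lemma rpow_pred_mul {x : ℝ} (hx : 0 ≤ x) {m : ℝ} (hm : 0 < m) :
    x ^ (m - 1) * x = x ^ m := by
  rcases eq_or_lt_of_le hx with h | h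
  · rw [← h, Real.zero_rpow hm.ne', mul_zero]
  · rw [← Real.rpow_add_one h.ne']; ring_nf

lemma hasDerivAt_zero_of_bound {r : ℝ} (hr : 0 < r) {f : ℝ → ℝ} (h0 : f 0 = 0)
    (hb : ∀ y, |f y| ≤ |y| ^ r * |y|) : HasDerivAt f 0 0 := by
  rw [hasDerivAt_iff_isLittleO, Asymptotics.isLittleO_iff]
  intro c hc
  have htend : Filter.Tendsto (fun y : ℝ => |y| ^ r) (nhds 0) (nhds 0) := by
    have habs : Filter.Tendsto (fun y : ℝ => |y|) (nhds 0) (nhds 0) := by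
      have := continuous_abs.tendsto (0:ℝ); simpa using this
    have h2 := (Real.continuousAt_rpow_const 0 r (Or.inr hr.le)).tendsto
    rw [Real.zero_rpow hr.ne'] at h2
    exact h2.comp habs
  filter_upwards [htend.eventually (eventually_le_nhds hc)] with y hy
  simp only [h0, sub_zero, smul_zero, Real.norm_eq_abs]
  calc |f y| ≤ |y| ^ r * |y| := hb y
    _ ≤ c * |y| := by
        apply mul_le_mul_of_nonneg_right hy (abs_nonneg y)

lemma hasDerivAt_abs_rpow_mul {q : ℝ} (hq : 1 < q) (x : ℝ) :
    HasDerivAt (fun y : ℝ => |y| ^ q * y) ((q + 1) * |x| ^ q) x := by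
  rcases eq_or_ne x 0 with hx | hx
  · subst hx
    have h0 : HasDerivAt (fun y : ℝ => |y| ^ q * y) 0 0 := by
      apply hasDerivAt_zero_of_bound (r := q) (by linarith)
      · simp
      · intro y
        rw [abs_mul, abs_of_nonneg (Real.rpow_nonneg (abs_nonneg y) q)]
    simpa [Real.zero_rpow (by positivity : q ≠ 0)] using h0
  · have h1 := (hasDerivAt_abs_rpow x hq).mul (hasDerivAt_id x)
    refine h1.congr_deriv (Eq.symm ?_)
    simp only [id, mul_one]
    have hx2 : x * x = |x| ^ (2:ℝ) := by
      rw [show (2:ℝ) = ((2:ℕ):ℝ) by norm_num, Real.rpow_natCast, sq_abs, sq]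
    have key : q * |x| ^ (q-2) * x * x = q * |x| ^ q := by
      rw [mul_assoc, hx2, mul_assoc, ← Real.rpow_add (abs_pos.mpr hx),
        show q - 2 + 2 = q by ring]
    rw [key]; ring

lemma lemF {m : ℝ} (hm : 1 ≤ m) {x u : ℝ} (hu : 0 ≤ u) (hux : u ≤ x) :
    (x + u) ^ m * (x - m * u) ≤ (x - u) ^ m * (x + m * u) := by
  rcases eq_or_lt_of_le hu with h0 | hu0
  · rw [← h0]; simp
  have hx : 0 < x := lt_of_lt_of_le hu0 hux
  set f : ℝ → ℝ := fun w => (x - w) ^ m * (x + m * w) - (x + w) ^ m * (x - m * w) with hf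
  have hcont : ContinuousOn f (Set.Icc 0 x) := by
    apply ContinuousOn.sub <;> apply ContinuousOn.mul
    · exact (Continuous.rpow_const (by continuity) fun w => Or.inr (by linarith)).continuousOn
    · exact Continuous.continuousOn (by continuity)
    · exact (Continuous.rpow_const (by continuity) fun w => Or.inr (by linarith)).continuousOn
    · exact Continuous.continuousOn (by continuity)
  have hderiv : ∀ w ∈ Set.Ioo (0:ℝ) x, HasDerivAt f
      (m * (m+1) * w * ((x + w) ^ (m-1) - (x - w) ^ (m-1))) w := by
    intro w hw
    obtain ⟨hw0, hwx⟩ := hw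
    have hxw1 : x - w ≠ 0 := by intro h; nlinarith
    have hxw2 : x + w ≠ 0 := by positivity
    have d1 : HasDerivAt (fun w : ℝ => (x - w) ^ m) (m * (x - w) ^ (m-1) * (-1)) w :=
      (Real.hasDerivAt_rpow_const (Or.inl hxw1)).comp w ((hasDerivAt_id w).const_sub x)
    have d2 : HasDerivAt (fun w : ℝ => (x + w) ^ m) (m * (x + w) ^ (m-1) * 1) w :=
      (Real.hasDerivAt_rpow_const (Or.inl hxw2)).comp w ((hasDerivAt_id w).const_add x)
    have d3 : HasDerivAt (fun w : ℝ => x + m * w) m w := by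
      simpa using ((hasDerivAt_id w).const_mul m).const_add x
    have d4 : HasDerivAt (fun w : ℝ => x - m * w) (-m) w := by
      simpa using ((hasDerivAt_id w).const_mul m).const_sub x
    have := (d1.mul d3).sub (d2.mul d4)
    refine this.congr_deriv (Eq.symm ?_)
    have e1 : (x - w) ^ m = (x - w) ^ (m-1) * (x - w) :=
      (rpow_pred_mul (by linarith) (by linarith)).symm
    have e2 : (x + w) ^ m = (x + w) ^ (m-1) * (x + w) :=
      (rpow_pred_mul (by linarith) (by linarith)).symm
    rw [e1, e2]; ring
  have hmono : MonotoneOn f (Set.Icc 0 x) := by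
    apply monotoneOn_of_deriv_nonneg (convex_Icc 0 x) hcont
    · intro w hw
      rw [interior_Icc] at hw
      exact ((hderiv w hw).differentiableAt).differentiableWithinAt
    · intro w hw
      rw [interior_Icc] at hw
      rw [(hderiv w hw).deriv]
      have h1 : (x - w) ^ (m-1) ≤ (x + w) ^ (m-1) := by
        apply Real.rpow_le_rpow (by nlinarith [hw.2]) (by nlinarith [hw.1]) (by linarith)
      have hco : (0:ℝ) ≤ m * (m+1) * w := by
        have h1' := hw.1
        have : (0:ℝ) ≤ m * (m+1) := by nlinarith
        exact mul_nonneg this h1'.le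
      exact mul_nonneg hco (sub_nonneg.mpr h1)
  have h0x : f 0 ≤ f u := hmono (Set.mem_Icc.mpr ⟨le_refl 0, hx.le⟩)
    (Set.mem_Icc.mpr ⟨hu, hux⟩) hu
  have hf0 : f 0 = 0 := by simp [hf]
  rw [hf0] at h0x
  simp only [hf] at h0x
  linarith

lemma Gprime_nonneg {q u : ℝ} (hq : 2 ≤ q) (hu : 0 < u) {r : ℝ} (hr : 0 ≤ r) :
    0 ≤ q * |r+u| ^ (q-2) * (r+u) * (q*u - r) - |r+u| ^ q
      + (q * |r-u| ^ (q-2) * (r-u) * (q*u + r) + |r-u| ^ q) := by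
  have ha : 0 < r + u := by linarith
  have habs_a : |r+u| = r+u := abs_of_pos ha
  have hA1 : (r+u) ^ (q-2) * (r+u) = (r+u) ^ (q-1) := by
    rw [show q-2 = (q-1)-1 by ring]; exact rpow_pred_mul ha.le (by linarith)
  have hA2 : (r+u) ^ (q-1) * (r+u) = (r+u) ^ q := by
    rw [show q-1 = q-1 by ring]
    have := rpow_pred_mul ha.le (show (0:ℝ) < q by linarith)
    exact this
  rcases le_total r u with hru | hru
  · -- r ≤ u
    have hb : 0 ≤ u - r := by linarith
    have habs_b : |r-u| = u-r := by rw [abs_sub_comm, abs_of_nonneg hb]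
    have hB1 : (u-r) ^ (q-2) * (u-r) = (u-r) ^ (q-1) := by
      rw [show q-2 = (q-1)-1 by ring]; exact rpow_pred_mul hb (by linarith)
    have hB2 : (u-r) ^ (q-1) * (u-r) = (u-r) ^ q :=
      rpow_pred_mul hb (show (0:ℝ) < q by linarith)
    -- key : (u+r)^(q-1)*((q-1)u - r) ≥ (u-r)^(q-1)*((q-1)u + r)
    have hm : 1 ≤ q - 1 := by linarith
    have hAm : (r+u) ^ ((q-1)-1) * (r+u) = (r+u) ^ (q-1) := rpow_pred_mul ha.le (by linarith)
    have hstep2 : (u-r) ^ ((q-1)-1) ≤ (r+u) ^ ((q-1)-1) :=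
      Real.rpow_le_rpow hb (by linarith) (by linarith)
    have hBm : (u-r) ^ ((q-1)-1) * (u-r) = (u-r) ^ (q-1) := rpow_pred_mul hb (by linarith)
    have key : (u-r) ^ (q-1) * ((q-1)*u + r) ≤ (r+u) ^ (q-1) * ((q-1)*u - r) := by
      have h1 : (u-r) ^ ((q-1)-1) * (r+u) * ((q-1)*u - r)
          ≤ (r+u) ^ ((q-1)-1) * (r+u) * ((q-1)*u - r) := by
        have hfac : (0:ℝ) ≤ (r+u) * ((q-1)*u - r) := by
          apply mul_nonneg ha.le
          nlinarith [mul_nonneg (show (0:ℝ) ≤ q-2 by linarith) hu.le]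
        calc (u-r) ^ ((q-1)-1) * (r+u) * ((q-1)*u - r)
            = (u-r) ^ ((q-1)-1) * ((r+u) * ((q-1)*u - r)) := by ring
          _ ≤ (r+u) ^ ((q-1)-1) * ((r+u) * ((q-1)*u - r)) :=
              mul_le_mul_of_nonneg_right hstep2 hfac
          _ = (r+u) ^ ((q-1)-1) * (r+u) * ((q-1)*u - r) := by ring
      have h2 : (u-r) ^ ((q-1)-1) * ((u-r) * ((q-1)*u + r))
          ≤ (u-r) ^ ((q-1)-1) * ((r+u) * ((q-1)*u - r)) := by
        apply mul_le_mul_of_nonneg_left _ (Real.rpow_nonneg hb _)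
        nlinarith [mul_nonneg (mul_nonneg hu.le hr) (show (0:ℝ) ≤ q-2 by linarith)]
      calc (u-r) ^ (q-1) * ((q-1)*u + r) = (u-r) ^ ((q-1)-1) * ((u-r) * ((q-1)*u + r)) := by
            rw [← hBm]; ring
        _ ≤ (u-r) ^ ((q-1)-1) * ((r+u) * ((q-1)*u - r)) := h2
        _ = (u-r) ^ ((q-1)-1) * (r+u) * ((q-1)*u - r) := by ring
        _ ≤ (r+u) ^ ((q-1)-1) * (r+u) * ((q-1)*u - r) := h1
        _ = (r+u) ^ (q-1) * ((q-1)*u - r) := by rw [hAm]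
    have hK : 0 ≤ (q+1) * ((r+u) ^ (q-1) * ((q-1)*u - r) - (u-r) ^ (q-1) * ((q-1)*u + r)) :=
      mul_nonneg (by linarith) (by linarith)
    rw [habs_a, habs_b]
    have hEq : q * (r+u) ^ (q-2) * (r+u) * (q*u - r) - (r+u) ^ q
        + (q * (u-r) ^ (q-2) * (r-u) * (q*u + r) + (u-r) ^ q)
        = (q+1) * ((r+u) ^ (q-1) * ((q-1)*u - r) - (u-r) ^ (q-1) * ((q-1)*u + r)) := by
      linear_combination (q*(q*u-r)) * hA1 + hA2 - (q*(q*u+r)) * hB1 - hB2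
    linarith [hK, hEq]
  · -- u ≤ r
    have hb : 0 ≤ r - u := by linarith
    have habs_b : |r-u| = r-u := abs_of_nonneg hb
    have hB1 : (r-u) ^ (q-2) * (r-u) = (r-u) ^ (q-1) := by
      rw [show q-2 = (q-1)-1 by ring]; exact rpow_pred_mul hb (by linarith)
    have hB2 : (r-u) ^ (q-1) * (r-u) = (r-u) ^ q :=
      rpow_pred_mul hb (show (0:ℝ) < q by linarith)
    have key : 0 ≤ (r+u) ^ (q-1) * ((q-1)*u - r) + (r-u) ^ (q-1) * ((q-1)*u + r) := by
      rcases le_total r ((q-1)*u) with hc | hc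
      · have t1 : 0 ≤ (r+u) ^ (q-1) * ((q-1)*u - r) :=
          mul_nonneg (Real.rpow_nonneg ha.le _) (by linarith)
        have t2 : 0 ≤ (r-u) ^ (q-1) * ((q-1)*u + r) :=
          mul_nonneg (Real.rpow_nonneg hb _) (by linarith)
        linarith
      · have hF := lemF (m := q-1) (by linarith) (x := r) (u := u) hu.le hru
        have : (r+u) ^ (q-1) * (r - (q-1)*u) ≤ (r-u) ^ (q-1) * (r + (q-1)*u) := hF
        nlinarith [this]
    have hK : 0 ≤ (q+1) * ((r+u) ^ (q-1) * ((q-1)*u - r) + (r-u) ^ (q-1) * ((q-1)*u + r)) :=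
      mul_nonneg (by linarith) key
    rw [habs_a, habs_b]
    have hEq : q * (r+u) ^ (q-2) * (r+u) * (q*u - r) - (r+u) ^ q
        + (q * (r-u) ^ (q-2) * (r-u) * (q*u + r) + (r-u) ^ q)
        = (q+1) * ((r+u) ^ (q-1) * ((q-1)*u - r) + (r-u) ^ (q-1) * ((q-1)*u + r)) := by
      linear_combination (q*(q*u-r)) * hA1 + hA2 + (q*(q*u+r)) * hB1 - hB2
    linarith [hK, hEq]

lemma hasDerivAt_G {q u : ℝ} (hq : 2 ≤ q) (r : ℝ) :
    HasDerivAt (fun r : ℝ => |r+u| ^ q * (q*u - r) + |r-u| ^ q * (q*u + r))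
      (q * |r+u| ^ (q-2) * (r+u) * (q*u - r) - |r+u| ^ q
        + (q * |r-u| ^ (q-2) * (r-u) * (q*u + r) + |r-u| ^ q)) r := by
  have hq1 : (1:ℝ) < q := by linarith
  have d1 : HasDerivAt (fun r : ℝ => |r+u| ^ q) (q * |r+u| ^ (q-2) * (r+u) * 1) r := by
    have := (hasDerivAt_abs_rpow (r+u) hq1).comp r ((hasDerivAt_id r).add_const u); exact this
  have d2 : HasDerivAt (fun r : ℝ => |r-u| ^ q) (q * |r-u| ^ (q-2) * (r-u) * 1) r := by
    have := (hasDerivAt_abs_rpow (r-u) hq1).comp r ((hasDerivAt_id r).sub_const u); exact this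
  have d3 : HasDerivAt (fun r : ℝ => q*u - r) (-1) r := by
    simpa using (hasDerivAt_id r).const_sub (q*u)
  have d4 : HasDerivAt (fun r : ℝ => q*u + r) 1 r := by
    simpa using (hasDerivAt_id r).const_add (q*u)
  have := (d1.mul d3).add (d2.mul d4)
  refine this.congr_deriv (Eq.symm ?_)
  ring

lemma keyE_aux {q u : ℝ} (hq : 2 ≤ q) (hu : 0 < u) {s : ℝ} (hs : 0 ≤ s) :
    2*q*u^(q+1) ≤ |s+u| ^ q * (q*u - s) + |s-u| ^ q * (q*u + s) := by
  set G : ℝ → ℝ := fun r => |r+u| ^ q * (q*u - r) + |r-u| ^ q * (q*u + r) with hG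
  have hcont : ContinuousOn G (Set.Icc 0 s) :=
    fun r _ => ((hasDerivAt_G hq r).continuousAt).continuousWithinAt
  have hmono : MonotoneOn G (Set.Icc 0 s) := by
    apply monotoneOn_of_deriv_nonneg (convex_Icc 0 s) hcont
    · intro r hr
      exact ((hasDerivAt_G hq r).differentiableAt).differentiableWithinAt
    · intro r hr
      rw [interior_Icc, Set.mem_Ioo] at hr
      rw [(hasDerivAt_G hq r).deriv]
      exact Gprime_nonneg hq hu hr.1.le
  have h0 : G 0 ≤ G s := by
    rcases eq_or_lt_of_le hs with h | h
    · rw [h]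
    · exact hmono (Set.mem_Icc.mpr ⟨le_refl 0, hs⟩) (Set.mem_Icc.mpr ⟨hs, le_refl s⟩) hs
  have hG0 : G 0 = 2*q*u^(q+1) := by
    have e : |(0:ℝ)-u| = u := by rw [abs_sub_comm, sub_zero, abs_of_pos hu]
    simp only [hG, zero_add, sub_zero, add_zero, e, abs_of_pos hu]
    have h1 : u ^ (q+1) = u ^ q * u := Real.rpow_add_one hu.ne' q
    linear_combination (-(2*q)) * h1
  calc 2*q*u^(q+1) = G 0 := hG0.symm
    _ ≤ G s := h0

lemma keyE {q u : ℝ} (hq : 2 ≤ q) (hu : 0 < u) (s : ℝ) :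
    2*q*u^(q+1) ≤ |s+u| ^ q * (q*u - s) + |s-u| ^ q * (q*u + s) := by
  rcases le_total 0 s with hs | hs
  · exact keyE_aux hq hu hs
  · have := keyE_aux hq hu (s := -s) (by linarith)
    rw [show -s+u = -(s-u) by ring, show -s-u = -(s+u) by ring, abs_neg, abs_neg] at this
    linarith

noncomputable def psi1 (p s t : ℝ) : ℝ :=
  p/(2*Real.sqrt t) * (|s+Real.sqrt t| ^ (p-2) * (s+Real.sqrt t)
    - |s-Real.sqrt t| ^ (p-2) * (s-Real.sqrt t))

noncomputable def psi2 (p s t : ℝ) : ℝ :=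
  p/(4*Real.sqrt t^3) * ((p-1)*Real.sqrt t*(|s+Real.sqrt t| ^ (p-2) + |s-Real.sqrt t| ^ (p-2))
    - (|s+Real.sqrt t| ^ (p-2) * (s+Real.sqrt t) - |s-Real.sqrt t| ^ (p-2) * (s-Real.sqrt t)))

lemma psiD1 {p : ℝ} (hp : 4 ≤ p) (s : ℝ) {t : ℝ} (ht : 0 < t) :
    HasDerivAt (fun u : ℝ => |s + Real.sqrt u| ^ p + |s - Real.sqrt u| ^ p) (psi1 p s t) t := by
  have hp1 : (1:ℝ) < p := by linarith
  have hu : 0 < Real.sqrt t := Real.sqrt_pos.mpr ht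
  have inner1 : HasDerivAt (fun r : ℝ => s + Real.sqrt r) (1/(2*Real.sqrt t)) t :=
    (Real.hasDerivAt_sqrt ht.ne').const_add s
  have inner2 : HasDerivAt (fun r : ℝ => s - Real.sqrt r) (-(1/(2*Real.sqrt t))) t :=
    (Real.hasDerivAt_sqrt ht.ne').const_sub s
  have d1 := (hasDerivAt_abs_rpow (s + Real.sqrt t) hp1).comp t inner1
  have d2 := (hasDerivAt_abs_rpow (s - Real.sqrt t) hp1).comp t inner2
  have := d1.add d2
  refine this.congr_deriv (Eq.symm ?_)
  rw [psi1]
  field_simp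
  ring

lemma psiD2 {p : ℝ} (hp : 4 ≤ p) (s : ℝ) {t : ℝ} (ht : 0 < t) :
    HasDerivAt (fun r : ℝ => psi1 p s r) (psi2 p s t) t := by
  have hq1 : (1:ℝ) < p - 2 := by linarith
  have hu : 0 < Real.sqrt t := Real.sqrt_pos.mpr ht
  have inner1 : HasDerivAt (fun r : ℝ => s + Real.sqrt r) (1/(2*Real.sqrt t)) t :=
    (Real.hasDerivAt_sqrt ht.ne').const_add s
  have inner2 : HasDerivAt (fun r : ℝ => s - Real.sqrt r) (-(1/(2*Real.sqrt t))) t :=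
    (Real.hasDerivAt_sqrt ht.ne').const_sub s
  have d1 := (hasDerivAt_abs_rpow_mul hq1 (s + Real.sqrt t)).comp t inner1
  have d2 := (hasDerivAt_abs_rpow_mul hq1 (s - Real.sqrt t)).comp t inner2
  have hg : HasDerivAt (fun r : ℝ => 2*Real.sqrt r) (2*(1/(2*Real.sqrt t))) t :=
    (Real.hasDerivAt_sqrt ht.ne').const_mul 2
  have hgne : 2*Real.sqrt t ≠ 0 := by positivity
  have hc : HasDerivAt (fun r : ℝ => p/(2*Real.sqrt r))
      ((0*(2*Real.sqrt t) - p*(2*(1/(2*Real.sqrt t))))/(2*Real.sqrt t)^2) t :=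
    (hasDerivAt_const t p).div hg hgne
  have := hc.mul (d1.sub d2)
  have heq : (fun r : ℝ => psi1 p s r)
      = fun r : ℝ => p/(2*Real.sqrt r) * (|s+Real.sqrt r| ^ (p-2) * (s+Real.sqrt r)
        - |s-Real.sqrt r| ^ (p-2) * (s-Real.sqrt r)) := rfl
  rw [heq]
  refine this.congr_deriv (Eq.symm ?_)
  rw [psi2]
  simp only [Pi.sub_apply, Function.comp_apply]
  have hune : Real.sqrt t ≠ 0 := hu.ne'
  field_simp
  ring

lemma deriv_deriv_psi {p : ℝ} (hp : 4 ≤ p) (s : ℝ) {t : ℝ} (ht : 0 < t) :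
    deriv (deriv (fun u : ℝ => |s + Real.sqrt u| ^ p + |s - Real.sqrt u| ^ p)) t
      = psi2 p s t := by
  have hev : deriv (fun u : ℝ => |s + Real.sqrt u| ^ p + |s - Real.sqrt u| ^ p)
      =ᶠ[nhds t] fun r : ℝ => psi1 p s r := by
    filter_upwards [Ioi_mem_nhds ht] with r hr
    exact (psiD1 hp s hr).deriv
  rw [hev.deriv_eq]
  exact (psiD2 hp s ht).deriv

lemma rpow_sqrt_cube {u : ℝ} (hu : 0 < u) {p : ℝ} :
    u ^ (p-1) = u ^ (p-4) * u^3 := by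
  rw [show u^3 = u ^ ((3:ℕ):ℝ) by rw [Real.rpow_natCast], ← Real.rpow_add hu]
  congr 1
  push_cast; ring

lemma psi2_ge {p : ℝ} (hp : 4 ≤ p) (s : ℝ) {t : ℝ} (ht : 0 < t) :
    p * (p - 2) / 2 * t ^ ((p - 4) / 2) ≤ psi2 p s t := by
  set u := Real.sqrt t with hudef
  have hu : 0 < u := Real.sqrt_pos.mpr ht
  have hq : (2:ℝ) ≤ p - 2 := by linarith
  have hkey := keyE (q := p-2) hq hu s
  -- t ^ ((p-4)/2) = u ^ (p-4)
  have hts : t ^ ((p-4)/2) = u ^ (p-4) := by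
    rw [hudef, Real.sqrt_eq_rpow, ← Real.rpow_mul ht.le]
    congr 1
    ring
  have hbr : (p-1)*u*(|s+u|^(p-2) + |s-u|^(p-2))
      - (|s+u|^(p-2)*(s+u) - |s-u|^(p-2)*(s-u))
      = |s+u|^(p-2)*((p-2)*u - s) + |s-u|^(p-2)*((p-2)*u + s) := by ring
  have hpos : (0:ℝ) < p/(4*u^3) := by positivity
  have h1 : 2*(p-2)*u^(p-2+1) ≤ (p-1)*u*(|s+u|^(p-2) + |s-u|^(p-2))
      - (|s+u|^(p-2)*(s+u) - |s-u|^(p-2)*(s-u)) := by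
    rw [hbr]; exact hkey
  have h2 : p/(4*u^3) * (2*(p-2)*u^(p-2+1)) ≤ psi2 p s t := by
    rw [psi2, ← hudef]
    exact mul_le_mul_of_nonneg_left h1 hpos.le
  have h3 : p * (p - 2) / 2 * t ^ ((p-4)/2) = p/(4*u^3) * (2*(p-2)*u^(p-2+1)) := by
    rw [hts, show p-2+1 = p-1 by ring, rpow_sqrt_cube hu]
    field_simp
    ring
  linarith

lemma psi2_zero {p : ℝ} (hp : 4 ≤ p) {t : ℝ} (ht : 0 < t) :
    psi2 p 0 t = p * (p - 2) / 2 * t ^ ((p - 4) / 2) := by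
  set u := Real.sqrt t with hudef
  have hu : 0 < u := Real.sqrt_pos.mpr ht
  have hts : t ^ ((p-4)/2) = u ^ (p-4) := by
    rw [hudef, Real.sqrt_eq_rpow, ← Real.rpow_mul ht.le]
    congr 1
    ring
  have hmu : u^(p-2)*u = u^(p-1) := by
    rw [show p-2 = (p-1)-1 by ring]; exact rpow_pred_mul hu.le (by linarith)
  have h3 : u^(p-1) = u^(p-4)*u^3 := rpow_sqrt_cube hu
  rw [psi2, ← hudef,
    show |(0:ℝ)+u| = u by rw [zero_add, abs_of_pos hu],
    show |(0:ℝ)-u| = u by rw [zero_sub, abs_neg, abs_of_pos hu], hts]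
  have hu3 : (u^3 : ℝ) ≠ 0 := by positivity
  field_simp
  linear_combination (4*(p-2)) * hmu + (4*(p-2)) * h3


lemma psi_convex_s7 {p : ℝ} (hp : 4 ≤ p) (s : ℝ) :
    ConvexOn ℝ (Set.Ioi (0 : ℝ))
      (fun u : ℝ => |s + Real.sqrt u| ^ p + |s - Real.sqrt u| ^ p - 2 * u ^ (p / 2)) := by
  set F : ℝ → ℝ := fun u : ℝ => |s + Real.sqrt u| ^ p + |s - Real.sqrt u| ^ p - 2 * u ^ (p / 2)
    with hF
  set F1 : ℝ → ℝ := fun r => psi1 p s r - p * r ^ (p/2 - 1) with hF1def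
  have hF1 : ∀ {x : ℝ}, 0 < x → HasDerivAt F (F1 x) x := by
    intro x hx
    have hpow : HasDerivAt (fun r : ℝ => 2 * r ^ (p/2)) (2 * (p/2 * x ^ (p/2 - 1))) x :=
      (Real.hasDerivAt_rpow_const (Or.inl hx.ne')).const_mul 2
    have := (psiD1 hp s hx).sub hpow
    refine this.congr_deriv (Eq.symm ?_)
    rw [hF1def]
    ring
  have hF2 : ∀ {x : ℝ}, 0 < x → HasDerivAt F1 (psi2 p s x - p * (p/2 - 1) * x ^ (p/2 - 1 - 1)) x := by
    intro x hx
    have hpow : HasDerivAt (fun r : ℝ => p * r ^ (p/2 - 1)) (p * ((p/2 - 1) * x ^ (p/2 - 1 - 1))) x :=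
      (Real.hasDerivAt_rpow_const (Or.inl hx.ne')).const_mul p
    have := (psiD2 hp s hx).sub hpow
    refine this.congr_deriv (Eq.symm ?_)
    ring
  have hF2nonneg : ∀ {x : ℝ}, 0 < x → 0 ≤ psi2 p s x - p * (p/2 - 1) * x ^ (p/2 - 1 - 1) := by
    intro x hx
    have := psi2_ge hp s hx
    have he : p * (p/2 - 1) * x ^ (p/2 - 1 - 1) = p * (p - 2) / 2 * x ^ ((p - 4) / 2) := by
      rw [show p/2 - 1 - 1 = (p-4)/2 by ring]
      ring
    linarith [he ▸ this]
  have hevF : ∀ {x : ℝ}, 0 < x → deriv F =ᶠ[nhds x] F1 := by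
    intro x hx
    filter_upwards [Ioi_mem_nhds hx] with r hr
    exact (hF1 hr).deriv
  apply convexOn_of_deriv2_nonneg (convex_Ioi 0)
  · exact fun x hx => (hF1 hx).continuousAt.continuousWithinAt
  · rw [interior_Ioi]
    exact fun x hx => (hF1 hx).differentiableAt.differentiableWithinAt
  · rw [interior_Ioi]
    intro x hx
    exact (((hevF hx).differentiableAt_iff).mpr (hF2 hx).differentiableAt).differentiableWithinAt
  · rw [interior_Ioi]
    intro x hx
    have : deriv^[2] F x = deriv (deriv F) x := rfl
    rw [this, (hevF hx).deriv_eq, (hF2 hx).deriv]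
    exact hF2nonneg hx

/-- **Lower bound on `ψ_s''` for `p ≥ 4`** (Corollary 2.2):
`ψ_s''(t) ≥ ψ_0''(t) = p(p−2)/2 · t^{(p−4)/2}`; equivalently,
`t ↦ ψ_s(t) − 2 t^{p/2}` is convex on `(0, ∞)`. -/
theorem psi_second_deriv_ge_of_four_le (p : ℝ) (hp : 4 ≤ p) (s t : ℝ) (ht : 0 < t) :
    deriv (deriv (fun u : ℝ => |s + Real.sqrt u| ^ p + |s - Real.sqrt u| ^ p)) t ≥
        p * (p - 2) / 2 * t ^ ((p - 4) / 2) ∧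
      deriv (deriv (fun u : ℝ => |(0 : ℝ) + Real.sqrt u| ^ p + |(0 : ℝ) - Real.sqrt u| ^ p)) t =
        p * (p - 2) / 2 * t ^ ((p - 4) / 2) ∧
      ConvexOn ℝ (Set.Ioi (0 : ℝ))
        (fun u : ℝ => |s + Real.sqrt u| ^ p + |s - Real.sqrt u| ^ p - 2 * u ^ (p / 2)) := by
  refine ⟨?_, ?_, psi_convex_s7 hp s⟩
  · rw [deriv_deriv_psi hp s ht]
    exact psi2_ge hp s ht
  · rw [deriv_deriv_psi hp 0 ht]
    exact psi2_zero hp ht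
end

section
/- Let p > 4, s ∈ ℝ and t > 0, and let ψ_s(t) = |s + √t|^p + |s − √t|^p. Then ψ_s''(t) ≥ (3p(p−1)(p−2)(p−3)/64) |s|^{p−4}; equivalently, the function t ↦ ψ_s(t) − (3p(p−1)(p−2)(p−3)/128) |s|^{p−4} t² is convex on (0, ∞). -/
open Real



lemma myDeriv_abs_rpow_mul_self {q : ℝ} (hq : 1 < q) (y : ℝ) :
    HasDerivAt (fun z : ℝ => |z| ^ q * z) ((q + 1) * |y| ^ q) y := by
  have h := (hasDerivAt_abs_rpow y hq).mul (hasDerivAt_id y)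
  refine h.congr_deriv ?_
  rcases eq_or_ne y 0 with rfl | hy
  · simp [Real.zero_rpow (by positivity : q ≠ 0)]
  · have hy' : (0:ℝ) < |y| := abs_pos.2 hy
    have h2 : |y| ^ (q-2) * y * y = |y| ^ q := by
      have h3 : |y| ^ (q-2) * |y| ^ (2:ℝ) = |y| ^ q := by
        rw [← Real.rpow_add hy']; ring_nf
      calc |y| ^ (q-2) * y * y = |y| ^ (q-2) * (|y|^(2:ℝ)) := by
            rw [Real.rpow_two, sq_abs]; ring
        _ = |y| ^ q := h3
    simp only [id_eq, mul_one]
    nlinarith [h2]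

lemma myHb' {p : ℝ} (hp : 4 < p) {s x : ℝ} (hs : 0 ≤ s) (hx : 0 ≤ x) :
    (p-3) * s^(p-4) * x ≤ |s+x|^(p-4)*(s+x) - |s-x|^(p-4)*(s-x) := by
  have hsx : 0 ≤ s + x := by linarith
  have h1 : |s+x|^(p-4)*(s+x) = (s+x)^(p-3) := by
    rw [abs_of_nonneg hsx]
    rcases eq_or_lt_of_le hsx with h | h
    · rw [← h, Real.zero_rpow (by linarith), Real.zero_rpow (by linarith), mul_zero]
    · rw [← Real.rpow_add_one (ne_of_gt h)]; ring_nf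
  have h2 : |s-x|^(p-4)*(s-x) ≤ s^(p-3) := by
    rcases le_or_gt 0 (s - x) with h | h
    · rw [abs_of_nonneg h]
      rcases eq_or_lt_of_le h with h' | h'
      · rw [← h', Real.zero_rpow (by linarith), zero_mul]
        positivity
      · rw [← Real.rpow_add_one (ne_of_gt h'), show p-4+1 = p-3 by ring]
        exact Real.rpow_le_rpow h (by linarith) (by linarith)
    · have : |s-x|^(p-4)*(s-x) ≤ 0 :=
        mul_nonpos_of_nonneg_of_nonpos (Real.rpow_nonneg (abs_nonneg _) _) h.le
      calc |s-x|^(p-4)*(s-x) ≤ 0 := this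
        _ ≤ s^(p-3) := Real.rpow_nonneg hs _
  have h3 : s^(p-3) + (p-3)*s^(p-4)*x ≤ (s+x)^(p-3) := by
    rcases eq_or_lt_of_le hs with h | h
    · rw [← h, Real.zero_rpow (by linarith : p-3 ≠ 0), Real.zero_rpow (by linarith : p-4 ≠ 0)]
      simp
      positivity
    · have hb := one_add_mul_self_le_rpow_one_add
        (show (-1:ℝ) ≤ x / s by have := div_nonneg hx h.le; linarith) (show (1:ℝ) ≤ p - 3 by linarith)
      have hsp : (0:ℝ) < s ^ (p-3) := Real.rpow_pos_of_pos h _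
      have key := mul_le_mul_of_nonneg_right hb hsp.le
      have e1 : (1 + x/s) ^ (p-3) * s^(p-3) = (s+x)^(p-3) := by
        rw [← Real.mul_rpow (by positivity) h.le]
        congr 1
        field_simp
      have e2 : (x/s) * s^(p-3) = x * s^(p-4) := by
        rw [show p - 3 = (p-4) + 1 by ring, Real.rpow_add_one (ne_of_gt h)]
        field_simp
      calc s^(p-3) + (p-3)*s^(p-4)*x = (1 + (p-3)*(x/s)) * s^(p-3) := by
            linear_combination (-(p-3)) * e2
        _ ≤ (1 + x/s) ^ (p-3) * s^(p-3) := key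
        _ = (s+x)^(p-3) := e1
  linarith [h1, h2, h3]

lemma myHb {p : ℝ} (hp : 4 < p) (s : ℝ) {x : ℝ} (hx : 0 ≤ x) :
    (p-3) * |s|^(p-4) * x ≤ |s+x|^(p-4)*(s+x) - |s-x|^(p-4)*(s-x) := by
  rcases le_or_gt 0 s with hs | hs
  · rw [abs_of_nonneg hs]; exact myHb' hp hs hx
  · have h := myHb' hp (s := -s) (by linarith) hx
    rw [abs_of_neg hs]
    rw [show -s+x = -(s-x) by ring, show -s-x = -(s+x) by ring, abs_neg, abs_neg] at h
    linarith [h]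

lemma myW_deriv {p : ℝ} (hp : 4 < p) (s z : ℝ) :
    HasDerivAt (fun z : ℝ =>
        (p-1) * z * (|s+z|^(p-2) + |s-z|^(p-2))
          - (|s+z|^(p-2)*(s+z) - |s-z|^(p-2)*(s-z))
          - (p-1)*(p-2)*(p-3)*|s|^(p-4)*z^3/3)
      ((p-1)*(p-2)*z*(|s+z|^(p-4)*(s+z) - |s-z|^(p-4)*(s-z))
          - (p-1)*(p-2)*(p-3)*|s|^(p-4)*z^2) z := by
  have hinnA : HasDerivAt (fun z : ℝ => s + z) 1 z := (hasDerivAt_id z).const_add s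
  have hinnB : HasDerivAt (fun z : ℝ => s - z) (-1) z := by
    simpa using (hasDerivAt_id z).const_sub s
  have hA : HasDerivAt (fun z : ℝ => |s+z| ^ (p-2))
      (((p-2) * |s+z| ^ (p-2-2) * (s+z)) * 1) z :=
    (hasDerivAt_abs_rpow (s+z) (by linarith)).comp z hinnA
  have hB : HasDerivAt (fun z : ℝ => |s-z| ^ (p-2))
      (((p-2) * |s-z| ^ (p-2-2) * (s-z)) * (-1)) z :=
    (hasDerivAt_abs_rpow (s-z) (by linarith)).comp z hinnB
  have hNa : HasDerivAt (fun z : ℝ => |s+z| ^ (p-2) * (s+z))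
      (((p-2+1) * |s+z| ^ (p-2)) * 1) z :=
    (myDeriv_abs_rpow_mul_self (by linarith) (s+z)).comp z hinnA
  have hNb : HasDerivAt (fun z : ℝ => |s-z| ^ (p-2) * (s-z))
      (((p-2+1) * |s-z| ^ (p-2)) * (-1)) z :=
    (myDeriv_abs_rpow_mul_self (by linarith) (s-z)).comp z hinnB
  have hlin : HasDerivAt (fun z : ℝ => (p-1) * z) ((p-1) * 1) z :=
    (hasDerivAt_id z).const_mul (p-1)
  have hcube : HasDerivAt (fun z : ℝ => (p-1)*(p-2)*(p-3)*|s|^(p-4)*z^3/3)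
      ((p-1)*(p-2)*(p-3)*|s|^(p-4)*z^2) z := by
    have h := (hasDerivAt_pow 3 z).const_mul ((p-1)*(p-2)*(p-3)*|s|^(p-4)/3)
    have he : (fun w : ℝ => (p-1)*(p-2)*(p-3)*|s|^(p-4)/3 * w^3)
        = fun w : ℝ => (p-1)*(p-2)*(p-3)*|s|^(p-4)*w^3/3 := by funext w; ring
    rw [he] at h
    refine h.congr_deriv ?_
    norm_num
    ring
  have htot := ((hlin.mul (hA.add hB)).sub (hNa.sub hNb)).sub hcube
  refine htot.congr_deriv ?_
  simp only [Pi.add_apply]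
  rw [show p-2-2 = p-4 by ring]
  ring

lemma myG {p : ℝ} (hp : 4 < p) (s : ℝ) {x : ℝ} (hx : 0 ≤ x) :
    (p-1)*(p-2)*(p-3)*|s|^(p-4)*x^3/3 ≤
      (p-1) * x * (|s+x|^(p-2) + |s-x|^(p-2))
        - (|s+x|^(p-2)*(s+x) - |s-x|^(p-2)*(s-x)) := by
  set W : ℝ → ℝ := fun z =>
    (p-1) * z * (|s+z|^(p-2) + |s-z|^(p-2))
      - (|s+z|^(p-2)*(s+z) - |s-z|^(p-2)*(s-z))
      - (p-1)*(p-2)*(p-3)*|s|^(p-4)*z^3/3 with hWdef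
  have hdiff : Differentiable ℝ W := fun z => (myW_deriv hp s z).differentiableAt
  have hmono : MonotoneOn W (Set.Ici 0) := by
    apply monotoneOn_of_deriv_nonneg (convex_Ici 0) hdiff.continuous.continuousOn
      hdiff.differentiableOn
    intro z hz
    rw [interior_Ici, Set.mem_Ioi] at hz
    rw [(myW_deriv hp s z).deriv]
    have hb := myHb hp s hz.le
    have hcz : (0:ℝ) ≤ (p-1)*(p-2)*z := mul_nonneg (mul_nonneg (by linarith) (by linarith)) hz.le
    nlinarith [mul_le_mul_of_nonneg_left hb hcz]
  have h0 : W 0 = 0 := by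
    rw [hWdef]; norm_num
  have := hmono (Set.self_mem_Ici) (Set.mem_Ici.2 hx) hx
  rw [h0] at this
  rw [hWdef] at this
  simp only at this
  linarith [this]

lemma myPsi1 {p : ℝ} (hp : 4 < p) (s : ℝ) {u : ℝ} (hu : 0 < u) :
    HasDerivAt (fun u : ℝ => |s + Real.sqrt u| ^ p + |s - Real.sqrt u| ^ p)
      (p * (|s + Real.sqrt u|^(p-2)*(s + Real.sqrt u)
        - |s - Real.sqrt u|^(p-2)*(s - Real.sqrt u)) / (2 * Real.sqrt u)) u := by
  have hx0 : 0 < Real.sqrt u := Real.sqrt_pos.2 hu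
  have hsq : HasDerivAt Real.sqrt (1/(2*Real.sqrt u)) u := Real.hasDerivAt_sqrt (ne_of_gt hu)
  have hA : HasDerivAt (fun u : ℝ => s + Real.sqrt u) (1/(2*Real.sqrt u)) u := hsq.const_add s
  have hB : HasDerivAt (fun u : ℝ => s - Real.sqrt u) (-(1/(2*Real.sqrt u))) u := hsq.const_sub s
  have h1 : HasDerivAt (fun u : ℝ => |s + Real.sqrt u| ^ p)
      ((p * |s + Real.sqrt u| ^ (p-2) * (s + Real.sqrt u)) * (1/(2*Real.sqrt u))) u :=
    by have h := (hasDerivAt_abs_rpow (s + Real.sqrt u) (p := p) (by linarith)).comp u hA; exact h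
  have h2 : HasDerivAt (fun u : ℝ => |s - Real.sqrt u| ^ p)
      ((p * |s - Real.sqrt u| ^ (p-2) * (s - Real.sqrt u)) * (-(1/(2*Real.sqrt u)))) u :=
    by have h := (hasDerivAt_abs_rpow (s - Real.sqrt u) (p := p) (by linarith)).comp u hB; exact h
  refine (h1.add h2).congr_deriv ?_
  field_simp
  ring

lemma myPsi2 {p : ℝ} (hp : 4 < p) (s : ℝ) {u : ℝ} (hu : 0 < u) :
    HasDerivAt (fun u : ℝ => p * (|s + Real.sqrt u|^(p-2)*(s + Real.sqrt u)
        - |s - Real.sqrt u|^(p-2)*(s - Real.sqrt u)) / (2 * Real.sqrt u))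
      (p * ((p-1) * Real.sqrt u * (|s + Real.sqrt u|^(p-2) + |s - Real.sqrt u|^(p-2))
          - (|s + Real.sqrt u|^(p-2)*(s + Real.sqrt u)
            - |s - Real.sqrt u|^(p-2)*(s - Real.sqrt u))) / (4 * u * Real.sqrt u)) u := by
  have hx0 : 0 < Real.sqrt u := Real.sqrt_pos.2 hu
  have hsq : HasDerivAt Real.sqrt (1/(2*Real.sqrt u)) u := Real.hasDerivAt_sqrt (ne_of_gt hu)
  have hA : HasDerivAt (fun u : ℝ => s + Real.sqrt u) (1/(2*Real.sqrt u)) u := hsq.const_add s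
  have hB : HasDerivAt (fun u : ℝ => s - Real.sqrt u) (-(1/(2*Real.sqrt u))) u := hsq.const_sub s
  have hNa : HasDerivAt (fun u : ℝ => |s + Real.sqrt u| ^ (p-2) * (s + Real.sqrt u))
      (((p-2+1) * |s + Real.sqrt u| ^ (p-2)) * (1/(2*Real.sqrt u))) u :=
    by have h := (myDeriv_abs_rpow_mul_self (q := p-2) (by linarith) (s + Real.sqrt u)).comp u hA; exact h
  have hNb : HasDerivAt (fun u : ℝ => |s - Real.sqrt u| ^ (p-2) * (s - Real.sqrt u))
      (((p-2+1) * |s - Real.sqrt u| ^ (p-2)) * (-(1/(2*Real.sqrt u)))) u :=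
    by have h := (myDeriv_abs_rpow_mul_self (q := p-2) (by linarith) (s - Real.sqrt u)).comp u hB; exact h
  have hnum := (hNa.sub hNb).const_mul p
  have hden : HasDerivAt (fun u : ℝ => 2 * Real.sqrt u) (2 * (1/(2*Real.sqrt u))) u :=
    hsq.const_mul 2
  have h := hnum.div hden (by positivity)
  refine h.congr_deriv ?_
  simp only [Pi.sub_apply]
  have hxx : Real.sqrt u * Real.sqrt u = u := Real.mul_self_sqrt hu.le
  generalize Real.sqrt u = x at hxx hx0 ⊢
  rw [← hxx]
  field_simp
  ring

lemma myDeriv2 {p : ℝ} (hp : 4 < p) (s : ℝ) {t : ℝ} (ht : 0 < t) :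
    deriv (deriv (fun u : ℝ => |s + Real.sqrt u| ^ p + |s - Real.sqrt u| ^ p)) t
      = p * ((p-1) * Real.sqrt t * (|s + Real.sqrt t|^(p-2) + |s - Real.sqrt t|^(p-2))
          - (|s + Real.sqrt t|^(p-2)*(s + Real.sqrt t)
            - |s - Real.sqrt t|^(p-2)*(s - Real.sqrt t))) / (4 * t * Real.sqrt t) := by
  have hev : deriv (fun u : ℝ => |s + Real.sqrt u| ^ p + |s - Real.sqrt u| ^ p)
      =ᶠ[nhds t] (fun u : ℝ => p * (|s + Real.sqrt u|^(p-2)*(s + Real.sqrt u)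
        - |s - Real.sqrt u|^(p-2)*(s - Real.sqrt u)) / (2 * Real.sqrt u)) := by
    filter_upwards [Ioi_mem_nhds ht] with v hv
    exact (myPsi1 hp s hv).deriv
  rw [hev.deriv_eq]
  exact (myPsi2 hp s ht).deriv

lemma myBound {p : ℝ} (hp : 4 < p) (s : ℝ) {t : ℝ} (ht : 0 < t) :
    3 * p * (p - 1) * (p - 2) * (p - 3) / 64 * |s| ^ (p - 4)
      ≤ p * ((p-1) * Real.sqrt t * (|s + Real.sqrt t|^(p-2) + |s - Real.sqrt t|^(p-2))
          - (|s + Real.sqrt t|^(p-2)*(s + Real.sqrt t)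
            - |s - Real.sqrt t|^(p-2)*(s - Real.sqrt t))) / (4 * t * Real.sqrt t) := by
  have hx0 : 0 < Real.sqrt t := Real.sqrt_pos.2 ht
  have hG := myG hp s hx0.le
  rw [le_div_iff₀ (by positivity)]
  have hpg := mul_le_mul_of_nonneg_left hG (by linarith : (0:ℝ) ≤ p)
  have hA : (0:ℝ) ≤ |s| ^ (p-4) := Real.rpow_nonneg (abs_nonneg s) _
  have hK : (0:ℝ) ≤ p*((p-1)*(p-2)*(p-3)*(|s|^(p-4)*Real.sqrt t^3)) := by
    apply mul_nonneg (by linarith)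
    apply mul_nonneg (mul_nonneg (mul_nonneg (by linarith) (by linarith)) (by linarith))
    positivity
  have hxx : Real.sqrt t * Real.sqrt t = t := Real.mul_self_sqrt ht.le
  set x := Real.sqrt t with hxdef
  rw [← hxx]
  nlinarith [hpg, hK]

/-- **Lower bound on `ψ_s''` for `p > 4`** (Lemma 2.3):
`ψ_s''(t) ≥ 3p(p−1)(p−2)(p−3)/64 · |s|^{p−4}`; equivalently, the function
`t ↦ ψ_s(t) − 3p(p−1)(p−2)(p−3)/128 · |s|^{p−4} t²` is convex on `(0, ∞)`. -/
theorem psi_second_deriv_ge_of_four_lt (p : ℝ) (hp : 4 < p) (s t : ℝ) (ht : 0 < t) :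
    deriv (deriv (fun u : ℝ => |s + Real.sqrt u| ^ p + |s - Real.sqrt u| ^ p)) t ≥
        3 * p * (p - 1) * (p - 2) * (p - 3) / 64 * |s| ^ (p - 4) ∧
      ConvexOn ℝ (Set.Ioi (0 : ℝ))
        (fun u : ℝ => |s + Real.sqrt u| ^ p + |s - Real.sqrt u| ^ p -
          3 * p * (p - 1) * (p - 2) * (p - 3) / 128 * |s| ^ (p - 4) * u ^ 2) := by
  set c : ℝ := 3 * p * (p - 1) * (p - 2) * (p - 3) / 128 * |s| ^ (p - 4) with hcdef
  have hg : ∀ u : ℝ, 0 < u → HasDerivAt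
      (fun u : ℝ => |s + Real.sqrt u| ^ p + |s - Real.sqrt u| ^ p - c * u ^ 2)
      (p * (|s + Real.sqrt u|^(p-2)*(s + Real.sqrt u)
        - |s - Real.sqrt u|^(p-2)*(s - Real.sqrt u)) / (2 * Real.sqrt u) - c * (2 * u)) u := by
    intro u hu
    have h2 : HasDerivAt (fun u : ℝ => c * u ^ 2) (c * (2 * u)) u := by
      simpa using (hasDerivAt_pow 2 u).const_mul c
    exact (myPsi1 hp s hu).sub h2
  constructor
  · rw [ge_iff_le, myDeriv2 hp s ht]
    exact myBound hp s ht
  · apply convexOn_of_deriv2_nonneg (convex_Ioi 0)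
    · intro u hu
      exact ((hg u hu).differentiableAt).continuousAt.continuousWithinAt
    · rw [interior_Ioi]
      intro u hu
      exact ((hg u hu).differentiableAt).differentiableWithinAt
    · rw [interior_Ioi]
      intro u hu
      have hev : deriv (fun u : ℝ => |s + Real.sqrt u| ^ p + |s - Real.sqrt u| ^ p - c * u ^ 2)
          =ᶠ[nhds u] (fun v : ℝ => p * (|s + Real.sqrt v|^(p-2)*(s + Real.sqrt v)
            - |s - Real.sqrt v|^(p-2)*(s - Real.sqrt v)) / (2 * Real.sqrt v) - c * (2 * v)) := by
        filter_upwards [Ioi_mem_nhds hu] with v hv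
        exact (hg v hv).deriv
      have hd2 : HasDerivAt (fun v : ℝ => p * (|s + Real.sqrt v|^(p-2)*(s + Real.sqrt v)
            - |s - Real.sqrt v|^(p-2)*(s - Real.sqrt v)) / (2 * Real.sqrt v) - c * (2 * v))
          (p * ((p-1) * Real.sqrt u * (|s + Real.sqrt u|^(p-2) + |s - Real.sqrt u|^(p-2))
          - (|s + Real.sqrt u|^(p-2)*(s + Real.sqrt u)
            - |s - Real.sqrt u|^(p-2)*(s - Real.sqrt u))) / (4 * u * Real.sqrt u)
            - c * 2) u := by
        have h3 : HasDerivAt (fun v : ℝ => c * (2 * v)) (c * 2) u := by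
          simpa [mul_assoc] using (hasDerivAt_id u).const_mul (c * 2)
        exact (myPsi2 hp s hu).sub h3
      exact (hd2.differentiableAt.congr_of_eventuallyEq hev).differentiableWithinAt
    · rw [interior_Ioi]
      intro u hu
      show 0 ≤ deriv (deriv
        (fun u : ℝ => |s + Real.sqrt u| ^ p + |s - Real.sqrt u| ^ p - c * u ^ 2)) u
      have hev : deriv (fun u : ℝ => |s + Real.sqrt u| ^ p + |s - Real.sqrt u| ^ p - c * u ^ 2)
          =ᶠ[nhds u] (fun v : ℝ => p * (|s + Real.sqrt v|^(p-2)*(s + Real.sqrt v)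
            - |s - Real.sqrt v|^(p-2)*(s - Real.sqrt v)) / (2 * Real.sqrt v) - c * (2 * v)) := by
        filter_upwards [Ioi_mem_nhds hu] with v hv
        exact (hg v hv).deriv
      rw [hev.deriv_eq]
      have h3 : HasDerivAt (fun v : ℝ => c * (2 * v)) (c * 2) u := by
        simpa [mul_assoc] using (hasDerivAt_id u).const_mul (c * 2)
      rw [((myPsi2 hp s hu).fun_sub h3).deriv]
      have hb := myBound hp s hu
      have h2c : c * 2 = 3 * p * (p - 1) * (p - 2) * (p - 3) / 64 * |s| ^ (p - 4) := by
        rw [hcdef]; ring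
      linarith [hb]
end

section
/- Let 3 < p < 4, s ∈ ℝ and t > 0, and let ψ_s(t) = |s + √t|^p + |s − √t|^p. Then ψ_s''(t) ≥ (p(p−1)(p−2)(p−3)/6) (|s| + √t)^{p−4}. -/
open Real Filter Topology

lemma sqpow (y c : ℝ) : ((y^2 : ℝ)) ^ (c/2) = |y| ^ c := by
  rw [← sq_abs, ← Real.rpow_natCast |y| 2, ← Real.rpow_mul (abs_nonneg y)]
  norm_num
  congr 1
  ring

lemma tendsto_abs_rpow {q : ℝ} (hq : 0 < q) :
    Tendsto (fun y : ℝ => |y| ^ q) (𝓝 0) (𝓝 0) := by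
  have h1 : ContinuousAt (fun z : ℝ => z ^ q) ((0:ℝ)) :=
    Real.continuousAt_rpow_const 0 q (Or.inr hq.le)
  have h2 : ContinuousAt ((fun z : ℝ => z ^ q) ∘ abs) 0 :=
    ContinuousAt.comp (by rw [abs_zero]; exact h1) continuous_abs.continuousAt
  simpa [ContinuousAt, abs_zero, Real.zero_rpow hq.ne', Function.comp_def] using h2

lemma hasDerivAt_L1 {p : ℝ} (hp : 2 ≤ p) (y : ℝ) :
    HasDerivAt (fun y : ℝ => (y^2) ^ (p/2)) (p * (y^2) ^ ((p-2)/2) * y) y := by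
  have hsq : HasDerivAt (fun y : ℝ => y^2) (2*y) y := by
    simpa using hasDerivAt_pow 2 y
  have h := hsq.rpow_const (p := p/2) (Or.inr (by linarith))
  convert h using 1
  rw [show p/2 - 1 = (p-2)/2 by ring]
  ring

lemma hasDerivAt_W {p : ℝ} (hp3 : 3 < p) (y : ℝ) :
    HasDerivAt (fun y : ℝ => (y^2) ^ ((p-2)/2)) ((p-2) * (y^2) ^ ((p-4)/2) * y) y := by
  rcases eq_or_ne y 0 with rfl | hy
  · rw [show (p-2) * (((0:ℝ)^2)) ^ ((p-4)/2) * 0 = 0 by ring]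
    rw [hasDerivAt_iff_tendsto_slope]
    apply squeeze_zero_norm' (a := fun y : ℝ => |y| ^ (p-3))
    · filter_upwards [self_mem_nhdsWithin] with y hy
      have hy : y ≠ 0 := hy
      have hy' : (0:ℝ) < |y| := abs_pos.mpr hy
      rw [slope_def_field]
      rw [show ((0:ℝ)^2) ^ ((p-2)/2) = 0 by
        rw [show ((0:ℝ)^2) = 0 by norm_num, Real.zero_rpow (ne_of_gt (by linarith))]]
      rw [sqpow y (p-2)]
      rw [sub_zero, sub_zero, Real.norm_eq_abs, abs_div, abs_of_nonneg (Real.rpow_nonneg (abs_nonneg y) _)]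
      rw [show p - 2 = (p-3) + 1 by ring, Real.rpow_add_one hy'.ne' (p-3)]
      rw [mul_div_assoc, div_self hy'.ne', mul_one]
    · exact (tendsto_abs_rpow (by linarith)).mono_left nhdsWithin_le_nhds
  · have hsq : HasDerivAt (fun y : ℝ => y^2) (2*y) y := by
      simpa using hasDerivAt_pow 2 y
    have h := hsq.rpow_const (p := (p-2)/2) (Or.inl (pow_ne_zero 2 hy))
    convert h using 1
    rw [show (p-2)/2 - 1 = (p-4)/2 by ring]
    ring

lemma hasDerivAt_H {p : ℝ} (hp3 : 3 < p) (y : ℝ) :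
    HasDerivAt (fun y : ℝ => (y^2) ^ ((p-2)/2) * y) ((p-1) * (y^2) ^ ((p-2)/2)) y := by
  rcases eq_or_ne y 0 with rfl | hy
  · rw [show (p-1) * (((0:ℝ)^2)) ^ ((p-2)/2) = 0 by
      rw [show ((0:ℝ)^2) = 0 by norm_num, Real.zero_rpow (ne_of_gt (by linarith))]; ring]
    rw [hasDerivAt_iff_tendsto_slope]
    apply squeeze_zero_norm' (a := fun y : ℝ => |y| ^ (p-2))
    · filter_upwards [self_mem_nhdsWithin] with y hy
      have hy : y ≠ 0 := hy
      have hy' : (0:ℝ) < |y| := abs_pos.mpr hy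
      rw [slope_def_field]
      rw [show ((0:ℝ)^2) ^ ((p-2)/2) * 0 = 0 by ring]
      rw [sqpow y (p-2), sub_zero, sub_zero, mul_div_assoc, div_self hy, mul_one,
        Real.norm_eq_abs, abs_of_nonneg (Real.rpow_nonneg (abs_nonneg y) _)]
    · exact (tendsto_abs_rpow (by linarith)).mono_left nhdsWithin_le_nhds
  · have hW := hasDerivAt_W hp3 y
    have h := hW.mul (hasDerivAt_id y)
    refine h.congr_deriv ?_
    have hy2 : (0:ℝ) < y^2 := by positivity
    have key : (y^2) ^ ((p-2)/2) = (y^2) ^ ((p-4)/2) * y^2 := by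
      rw [show (p-2)/2 = (p-4)/2 + 1 by ring, Real.rpow_add_one hy2.ne']
    simp only [id_eq]
    rw [key]; ring

lemma phi_norm_le {p : ℝ} (hp3 : 3 < p) (y : ℝ) :
    ‖(y^2)^((p-4)/2) * y‖ ≤ |y| ^ (p-3) := by
  rcases eq_or_ne y 0 with rfl | hy
  · rw [show ((0:ℝ)^2)^((p-4)/2) * 0 = 0 by ring, norm_zero, abs_zero,
      Real.zero_rpow (ne_of_gt (by linarith))]
  · rw [sqpow y (p-4), Real.norm_eq_abs, abs_mul,
      abs_of_nonneg (Real.rpow_nonneg (abs_nonneg y) _),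
      ← Real.rpow_add_one (abs_ne_zero.2 hy), show p-4+1 = p-3 by ring]

lemma phi_cont {p : ℝ} (hp3 : 3 < p) : Continuous (fun y : ℝ => (y^2)^((p-4)/2) * y) := by
  rw [continuous_iff_continuousAt]
  intro y
  rcases eq_or_ne y 0 with rfl | hy
  · have h0 : Tendsto (fun y : ℝ => (y^2)^((p-4)/2) * y) (𝓝 0) (𝓝 0) :=
      squeeze_zero_norm (phi_norm_le hp3) (tendsto_abs_rpow (by linarith))
    have : ((0:ℝ)^2)^((p-4)/2) * 0 = 0 := by ring
    rw [ContinuousAt, this]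
    exact h0
  · have h1 : ContinuousAt (fun y : ℝ => (y^2)^((p-4)/2)) y := by
      have hg : ContinuousAt (fun y : ℝ => y^2) y := (continuous_pow 2).continuousAt
      have hf : ContinuousAt (fun z : ℝ => z ^ ((p-4)/2)) (y^2) :=
        Real.continuousAt_rpow_const _ _ (Or.inl (pow_ne_zero 2 hy))
      have hc : ContinuousAt ((fun z : ℝ => z ^ ((p-4)/2)) ∘ (fun y : ℝ => y^2)) y :=
        ContinuousAt.comp hf hg
      exact hc
    exact h1.mul continuousAt_id

lemma hasDerivAt_phi {p : ℝ} (hp3 : 3 < p) {y : ℝ} (hy : y ≠ 0) :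
    HasDerivAt (fun y : ℝ => (y^2)^((p-4)/2) * y) ((p-3) * (y^2)^((p-4)/2)) y := by
  have hsq : HasDerivAt (fun y : ℝ => y^2) (2*y) y := by
    simpa using hasDerivAt_pow 2 y
  have h := (hsq.rpow_const (p := (p-4)/2) (Or.inl (pow_ne_zero 2 hy))).mul (hasDerivAt_id y)
  refine h.congr_deriv ?_
  have hy2 : (0:ℝ) < y^2 := by positivity
  have key : (y^2) ^ ((p-4)/2) = (y^2) ^ ((p-4)/2 - 1) * y^2 := by
    rw [← Real.rpow_add_one hy2.ne', sub_add_cancel]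
  simp only [id_eq]
  rw [key]
  ring

lemma phi_bound {p : ℝ} (hp3 : 3 < p) (hp4 : p < 4) {R A B : ℝ} (hR : 0 < R)
    (hA : |A| ≤ R) (hB : |B| ≤ R) (hAB : B ≤ A) :
    (p-3) * R^(p-4) * (A - B) ≤ (A^2)^((p-4)/2)*A - (B^2)^((p-4)/2)*B := by
  set c := (p-3) * R^(p-4) with hc
  set η := fun y : ℝ => (y^2)^((p-4)/2) * y - c * y with hη
  have hcont : Continuous η := (phi_cont hp3).sub (continuous_const.mul continuous_id)
  have hder : ∀ y : ℝ, y ≠ 0 → HasDerivAt η ((p-3) * (y^2)^((p-4)/2) - c) y := by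
    intro y hy
    have h2 : HasDerivAt (fun y : ℝ => c * y) c y := by
      simpa using (hasDerivAt_id y).const_mul c
    exact (hasDerivAt_phi hp3 hy).sub h2
  have hder_nonneg : ∀ y : ℝ, y ≠ 0 → |y| ≤ R → 0 ≤ (p-3) * (y^2)^((p-4)/2) - c := by
    intro y hy hyR
    rw [sqpow y (p-4), hc]
    have h1 : R ^ (p-4) ≤ |y| ^ (p-4) :=
      Real.rpow_le_rpow_of_nonpos (abs_pos.mpr hy) hyR (by linarith)
    nlinarith [h1]
  have mono : ∀ (I : Set ℝ), Convex ℝ I → (∀ y ∈ interior I, y ≠ 0 ∧ |y| ≤ R) →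
      MonotoneOn η I := by
    intro I hI hint
    apply monotoneOn_of_deriv_nonneg hI hcont.continuousOn
    · intro y hy
      exact ((hder y (hint y hy).1).differentiableAt).differentiableWithinAt
    · intro y hy
      rw [(hder y (hint y hy).1).deriv]
      exact hder_nonneg y (hint y hy).1 (hint y hy).2
  have mono1 : MonotoneOn η (Set.Icc 0 R) := by
    apply mono _ (convex_Icc _ _)
    intro y hy
    rw [interior_Icc] at hy
    exact ⟨ne_of_gt hy.1, by rw [abs_of_pos hy.1]; exact hy.2.le⟩
  have mono2 : MonotoneOn η (Set.Icc (-R) 0) := by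
    apply mono _ (convex_Icc _ _)
    intro y hy
    rw [interior_Icc] at hy
    exact ⟨ne_of_lt hy.2, by rw [abs_of_neg hy.2]; linarith [hy.1]⟩
  have hBA : η B ≤ η A := by
    have hA1 : -R ≤ A := by cases' abs_le.mp hA with h1 h2; linarith
    have hA2 : A ≤ R := (abs_le.mp hA).2
    have hB1 : -R ≤ B := (abs_le.mp hB).1
    have hB2 : B ≤ R := (abs_le.mp hB).2
    rcases le_or_gt 0 B with h0B | hB0
    · exact mono1 ⟨h0B, hB2⟩ ⟨le_trans h0B hAB, hA2⟩ hAB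
    · rcases le_or_gt A 0 with hA0 | h0A
      · exact mono2 ⟨hB1, hB0.le⟩ ⟨hA1, hA0⟩ hAB
      · have e1 : η B ≤ η 0 := mono2 ⟨hB1, hB0.le⟩ ⟨by linarith, le_refl 0⟩ hB0.le
        have e2 : η 0 ≤ η A := mono1 ⟨le_refl 0, by linarith⟩ ⟨h0A.le, hA2⟩ h0A.le
        linarith
  simp only [hη] at hBA
  linarith [hBA]

lemma hasDerivAt_K {p : ℝ} (hp3 : 3 < p) (s r : ℝ) :
    HasDerivAt (fun r : ℝ =>
        r * (p*(p-1)*((((s+r)^2)^((p-2)/2)) + (((s-r)^2)^((p-2)/2))))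
          - p*((((s+r)^2)^((p-2)/2))*(s+r) - (((s-r)^2)^((p-2)/2))*(s-r)))
      (p*(p-1)*(p-2)*r*((((s+r)^2)^((p-4)/2))*(s+r) - (((s-r)^2)^((p-4)/2))*(s-r))) r := by
  have hadd : HasDerivAt (fun r : ℝ => s + r) 1 r := (hasDerivAt_id r).const_add s
  have hsub : HasDerivAt (fun r : ℝ => s - r) (-1) r := (hasDerivAt_id r).const_sub s
  have hWa : HasDerivAt (fun r : ℝ => ((s+r)^2)^((p-2)/2))
      ((p-2) * ((s+r)^2)^((p-4)/2) * (s+r) * 1) r := by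
    simpa [Function.comp_def] using HasDerivAt.comp r (hasDerivAt_W hp3 (s+r)) hadd
  have hWb : HasDerivAt (fun r : ℝ => ((s-r)^2)^((p-2)/2))
      ((p-2) * ((s-r)^2)^((p-4)/2) * (s-r) * (-1)) r := by
    simpa [Function.comp_def] using HasDerivAt.comp r (hasDerivAt_W hp3 (s-r)) hsub
  have hHa : HasDerivAt (fun r : ℝ => ((s+r)^2)^((p-2)/2) * (s+r))
      ((p-1) * ((s+r)^2)^((p-2)/2) * 1) r := by
    simpa [Function.comp_def] using HasDerivAt.comp r (hasDerivAt_H hp3 (s+r)) hadd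
  have hHb : HasDerivAt (fun r : ℝ => ((s-r)^2)^((p-2)/2) * (s-r))
      ((p-1) * ((s-r)^2)^((p-2)/2) * (-1)) r := by
    simpa [Function.comp_def] using HasDerivAt.comp r (hasDerivAt_H hp3 (s-r)) hsub
  have h := (((hasDerivAt_id r).mul ((hWa.add hWb).const_mul (p*(p-1)))).sub
    ((hHa.sub hHb).const_mul p))
  refine h.congr_deriv ?_
  simp only [id_eq, Pi.add_apply, Pi.sub_apply]
  ring

lemma K_lower_bound {p : ℝ} (hp3 : 3 < p) (hp4 : p < 4) (s : ℝ) {x : ℝ} (hx : 0 < x) :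
    2/3 * (p*(p-1)*(p-2)*(p-3) * (|s|+x)^(p-4)) * x^3 ≤
      x * (p*(p-1)*((((s+x)^2)^((p-2)/2)) + (((s-x)^2)^((p-2)/2))))
        - p*((((s+x)^2)^((p-2)/2))*(s+x) - (((s-x)^2)^((p-2)/2))*(s-x)) := by
  set R := |s| + x with hR
  have hRpos : 0 < R := by positivity
  set c0 := p*(p-1)*(p-2)*(p-3) * R^(p-4) with hc0
  set D := fun r : ℝ =>
      (r * (p*(p-1)*((((s+r)^2)^((p-2)/2)) + (((s-r)^2)^((p-2)/2))))
        - p*((((s+r)^2)^((p-2)/2))*(s+r) - (((s-r)^2)^((p-2)/2))*(s-r)))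
      - 2/3 * c0 * r^3 with hD
  have hDderiv : ∀ r : ℝ, HasDerivAt D
      (p*(p-1)*(p-2)*r*((((s+r)^2)^((p-4)/2))*(s+r) - (((s-r)^2)^((p-4)/2))*(s-r))
        - 2/3 * c0 * (3*r^2)) r := by
    intro r
    have hcube : HasDerivAt (fun r : ℝ => 2/3 * c0 * r^3) (2/3 * c0 * (3*r^2)) r := by
      have := (hasDerivAt_pow 3 r).const_mul (2/3 * c0)
      refine this.congr_deriv ?_
      try norm_num
      try ring
    exact (hasDerivAt_K hp3 s r).sub hcube
  have hmono : MonotoneOn D (Set.Icc 0 x) := by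
    apply monotoneOn_of_deriv_nonneg (convex_Icc _ _)
    · exact (Differentiable.continuous (fun r => (hDderiv r).differentiableAt)).continuousOn
    · exact fun r _ => (hDderiv r).differentiableAt.differentiableWithinAt
    · intro r hr
      rw [interior_Icc] at hr
      rw [(hDderiv r).deriv]
      have hr0 : 0 < r := hr.1
      have hbd := phi_bound hp3 hp4 hRpos (A := s + r) (B := s - r)
        (by rw [hR]; cases' abs_le.mp (le_refl |s|) with h1 h2
            have := abs_add_le s r
            have : |s + r| ≤ |s| + |r| := abs_add_le s r
            rw [abs_of_pos hr0] at this
            linarith [hr.2])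
        (by have : |s - r| ≤ |s| + |r| := abs_sub s r
            rw [abs_of_pos hr0] at this
            rw [hR]; linarith [hr.2])
        (by linarith)
      have hexp : (s + r) - (s - r) = 2 * r := by ring
      rw [hexp] at hbd
      rw [hc0]
      nlinarith [hbd, mul_pos (mul_pos (mul_pos (by linarith : (0:ℝ) < p) (by linarith : (0:ℝ) < p-1)) (by linarith : (0:ℝ) < p-2)) hr0]
  have h0x : D 0 ≤ D x := hmono (Set.left_mem_Icc.mpr hx.le) (Set.right_mem_Icc.mpr hx.le) hx.le
  have hD0 : D 0 = 0 := by
    simp only [hD, add_zero, sub_zero]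
    ring
  have hfin : 0 ≤ D x := by rw [← hD0]; exact h0x
  have hDx : D x = (x * (p*(p-1)*((((s+x)^2)^((p-2)/2)) + (((s-x)^2)^((p-2)/2))))
        - p*((((s+x)^2)^((p-2)/2))*(s+x) - (((s-x)^2)^((p-2)/2))*(s-x)))
      - 2/3 * c0 * x^3 := by simp only [hD]
  rw [hDx] at hfin
  rw [hR] at hc0
  rw [show (2:ℝ)/3 * (p*(p-1)*(p-2)*(p-3) * (|s|+x)^(p-4)) * x^3 = 2/3 * c0 * x^3 by rw [hc0]]
  linarith [hfin]

/-- **Lower bound on `ψ_s''` for `3 < p < 4`** (Lemma 2.4):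
`ψ_s''(t) ≥ p(p−1)(p−2)(p−3)/6 · (|s| + √t)^{p−4}`. -/
theorem psi_second_deriv_ge_of_lt_four (p : ℝ) (hp3 : 3 < p) (hp4 : p < 4) (s t : ℝ)
    (ht : 0 < t) :
    deriv (deriv (fun u : ℝ => |s + Real.sqrt u| ^ p + |s - Real.sqrt u| ^ p)) t ≥
      p * (p - 1) * (p - 2) * (p - 3) / 6 * (|s| + Real.sqrt t) ^ (p - 4) := by
  have hx : 0 < Real.sqrt t := Real.sqrt_pos.mpr ht
  have hFG : (fun u : ℝ => |s + Real.sqrt u| ^ p + |s - Real.sqrt u| ^ p)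
      = (fun u : ℝ => ((s + Real.sqrt u)^2) ^ (p/2) + ((s - Real.sqrt u)^2) ^ (p/2)) := by
    funext u
    rw [sqpow (s + Real.sqrt u) p, sqpow (s - Real.sqrt u) p]
  rw [hFG]
  set G1 : ℝ → ℝ := fun u => p * ((((s+Real.sqrt u)^2)^((p-2)/2))*(s+Real.sqrt u)
      - (((s-Real.sqrt u)^2)^((p-2)/2))*(s-Real.sqrt u)) * (2*Real.sqrt u)⁻¹ with hG1
  have hG : ∀ u : ℝ, 0 < u → HasDerivAt
      (fun u : ℝ => ((s + Real.sqrt u)^2) ^ (p/2) + ((s - Real.sqrt u)^2) ^ (p/2)) (G1 u) u := by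
    intro u hu
    have hsu : 0 < Real.sqrt u := Real.sqrt_pos.mpr hu
    have hsq : HasDerivAt Real.sqrt (1/(2*Real.sqrt u)) u := Real.hasDerivAt_sqrt hu.ne'
    have ha : HasDerivAt (fun u : ℝ => s + Real.sqrt u) (1/(2*Real.sqrt u)) u := hsq.const_add s
    have hb : HasDerivAt (fun u : ℝ => s - Real.sqrt u) (-(1/(2*Real.sqrt u))) u := hsq.const_sub s
    have h1 : HasDerivAt (fun u : ℝ => ((s + Real.sqrt u)^2) ^ (p/2))
        ((p * ((s+Real.sqrt u)^2)^((p-2)/2) * (s+Real.sqrt u)) * (1/(2*Real.sqrt u))) u := by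
      simpa [Function.comp_def] using
        HasDerivAt.comp u (hasDerivAt_L1 (by linarith) (s + Real.sqrt u)) ha
    have h2 : HasDerivAt (fun u : ℝ => ((s - Real.sqrt u)^2) ^ (p/2))
        ((p * ((s-Real.sqrt u)^2)^((p-2)/2) * (s-Real.sqrt u)) * (-(1/(2*Real.sqrt u)))) u := by
      simpa [Function.comp_def] using
        HasDerivAt.comp u (hasDerivAt_L1 (by linarith) (s - Real.sqrt u)) hb
    have h := h1.add h2
    refine h.congr_deriv ?_
    simp only [hG1]
    field_simp
    ring
  have hev : deriv (fun u : ℝ => ((s + Real.sqrt u)^2) ^ (p/2) + ((s - Real.sqrt u)^2) ^ (p/2))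
      =ᶠ[𝓝 t] G1 := by
    filter_upwards [isOpen_Ioi.mem_nhds ht] with u hu
    exact (hG u hu).deriv
  rw [hev.deriv_eq]
  have hsq : HasDerivAt Real.sqrt (1/(2*Real.sqrt t)) t := Real.hasDerivAt_sqrt ht.ne'
  have ha : HasDerivAt (fun u : ℝ => s + Real.sqrt u) (1/(2*Real.sqrt t)) t := hsq.const_add s
  have hb : HasDerivAt (fun u : ℝ => s - Real.sqrt u) (-(1/(2*Real.sqrt t))) t := hsq.const_sub s
  have hHa : HasDerivAt (fun u : ℝ => (((s+Real.sqrt u)^2)^((p-2)/2))*(s+Real.sqrt u))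
      (((p-1) * ((s+Real.sqrt t)^2)^((p-2)/2)) * (1/(2*Real.sqrt t))) t := by
    simpa [Function.comp_def] using
      HasDerivAt.comp t (hasDerivAt_H hp3 (s + Real.sqrt t)) ha
  have hHb : HasDerivAt (fun u : ℝ => (((s-Real.sqrt u)^2)^((p-2)/2))*(s-Real.sqrt u))
      (((p-1) * ((s-Real.sqrt t)^2)^((p-2)/2)) * (-(1/(2*Real.sqrt t)))) t := by
    simpa [Function.comp_def] using
      HasDerivAt.comp t (hasDerivAt_H hp3 (s - Real.sqrt t)) hb
  have hden : HasDerivAt (fun u : ℝ => (2*Real.sqrt u)⁻¹)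
      (-(2*(1/(2*Real.sqrt t)))/((2*Real.sqrt t)^2)) t := by
    have h2s : HasDerivAt (fun u : ℝ => 2*Real.sqrt u) (2*(1/(2*Real.sqrt t))) t :=
      hsq.const_mul 2
    exact h2s.inv (by positivity)
  have hG1d : HasDerivAt G1
      ((p * (((p-1) * ((s+Real.sqrt t)^2)^((p-2)/2)) * (1/(2*Real.sqrt t))
          - ((p-1) * ((s-Real.sqrt t)^2)^((p-2)/2)) * (-(1/(2*Real.sqrt t))))) * (2*Real.sqrt t)⁻¹
        + (p * ((((s+Real.sqrt t)^2)^((p-2)/2))*(s+Real.sqrt t)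
          - (((s-Real.sqrt t)^2)^((p-2)/2))*(s-Real.sqrt t)))
            * (-(2*(1/(2*Real.sqrt t)))/((2*Real.sqrt t)^2))) t :=
    ((hHa.sub hHb).const_mul p).mul hden
  rw [hG1d.deriv]
  have hK := K_lower_bound hp3 hp4 s hx
  set x := Real.sqrt t with hxdef
  have hVeq : (p * (((p-1) * ((s+x)^2)^((p-2)/2)) * (1/(2*x))
          - ((p-1) * ((s-x)^2)^((p-2)/2)) * (-(1/(2*x))))) * (2*x)⁻¹
        + (p * ((((s+x)^2)^((p-2)/2))*(s+x) - (((s-x)^2)^((p-2)/2))*(s-x)))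
            * (-(2*(1/(2*x)))/((2*x)^2))
      = (x * (p*(p-1)*((((s+x)^2)^((p-2)/2)) + (((s-x)^2)^((p-2)/2))))
          - p*((((s+x)^2)^((p-2)/2))*(s+x) - (((s-x)^2)^((p-2)/2))*(s-x))) / (4*x^3) := by
    field_simp
    ring
  rw [hVeq, ge_iff_le, le_div_iff₀ (by positivity)]
  nlinarith [hK]
end

section
/- Let p > 3. Then there exists a constant C_p > 0, depending only on p, such that for every x ∈ [0, 1/2], |√(1/2 + x) + √(1/2 − x)|^p + |√(1/2 + x) − √(1/2 − x)|^p ≤ 2^{p/2} − C_p x². -/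
open Real

lemma two_coeff_chord (q t : ℝ) (hq1 : 1 < q) (ht0 : 0 ≤ t) (ht1 : t ≤ 1) :
    (1 + t) ^ q + (1 - t) ^ q ≤ 2 ^ q - 2 * (2 ^ q - 2) * ((1 - t ^ 2) / 4) := by
  have h2q : (2:ℝ) < 2 ^ q := by
    calc (2:ℝ) = 2 ^ (1:ℝ) := (Real.rpow_one 2).symm
    _ < 2 ^ q := (Real.rpow_lt_rpow_left_iff (by norm_num)).mpr hq1
  have hconv := convexOn_rpow (le_of_lt hq1)
  have h1 : (1 + t) ^ q ≤ (1 - t) * 1 + t * 2 ^ q := by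
    have := hconv.2 (Set.mem_Ici.mpr (by norm_num : (0:ℝ) ≤ 1))
      (Set.mem_Ici.mpr (by norm_num : (0:ℝ) ≤ 2))
      (by linarith : (0:ℝ) ≤ 1 - t) ht0 (by ring)
    simp only [smul_eq_mul] at this
    have e : (1 - t) * 1 + t * 2 = 1 + t := by ring
    rw [e] at this
    simpa [Real.one_rpow] using this
  have h2 : (1 - t) ^ q ≤ (1 - t) * 1 := by
    have := hconv.2 (Set.mem_Ici.mpr (by norm_num : (0:ℝ) ≤ 1))
      (Set.mem_Ici.mpr (le_refl (0:ℝ)))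
      (by linarith : (0:ℝ) ≤ 1 - t) ht0 (by ring)
    simp only [smul_eq_mul] at this
    have e : (1 - t) * 1 + t * 0 = 1 - t := by ring
    rw [e] at this
    have hz : (0:ℝ) ^ q = 0 := Real.zero_rpow (by linarith)
    rw [Real.one_rpow, hz] at this
    linarith
  have hA : (0:ℝ) ≤ 2 ^ q - 2 := by linarith
  have hT : (0:ℝ) ≤ 1 - t := by linarith
  nlinarith [h1, h2, mul_nonneg (mul_nonneg hA hT) hT]

/-- **Two-coefficient diagonal stability** (the case `n = 2` in the proof of Theorem 1.3):
for `p > 3` there is `C_p > 0` such that for all `x ∈ [0, 1/2]`,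
`|√(1/2 + x) + √(1/2 − x)|^p + |√(1/2 + x) − √(1/2 − x)|^p ≤ 2^{p/2} − C_p x²`. -/
theorem two_coefficient_stability (p : ℝ) (hp : 3 < p) :
    ∃ C : ℝ, 0 < C ∧ ∀ x ∈ Set.Icc (0 : ℝ) (1 / 2),
      |Real.sqrt (1 / 2 + x) + Real.sqrt (1 / 2 - x)| ^ p +
          |Real.sqrt (1 / 2 + x) - Real.sqrt (1 / 2 - x)| ^ p ≤
        (2 : ℝ) ^ (p / 2) - C * x ^ 2 := by
  set q := p / 2 with hq
  have hq1 : 1 < q := by rw [hq]; linarith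
  have h2q : (2:ℝ) < 2 ^ q := by
    calc (2:ℝ) = 2 ^ (1:ℝ) := (Real.rpow_one 2).symm
    _ < 2 ^ q := (Real.rpow_lt_rpow_left_iff (by norm_num)).mpr hq1
  refine ⟨2 * (2 ^ q - 2), by linarith, ?_⟩
  rintro x ⟨hx0, hx2⟩
  have ha : (0:ℝ) ≤ 1/2 + x := by linarith
  have hb : (0:ℝ) ≤ 1/2 - x := by linarith
  set sa := Real.sqrt (1/2 + x) with hsa'
  set sb := Real.sqrt (1/2 - x) with hsb'
  have hsa : 0 ≤ sa := Real.sqrt_nonneg _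
  have hsb : 0 ≤ sb := Real.sqrt_nonneg _
  have hba : sb ≤ sa := Real.sqrt_le_sqrt (by linarith)
  set u := Real.sqrt ((1/2+x) * (1/2-x)) with hu
  have hu0 : 0 ≤ u := Real.sqrt_nonneg _
  have husq : u ^ 2 = 1/4 - x^2 := by
    rw [hu, Real.sq_sqrt (mul_nonneg ha hb)]; ring
  have hu2 : u ≤ 1/2 := by nlinarith
  have hsasq : sa ^ 2 = 1/2 + x := Real.sq_sqrt ha
  have hsbsq : sb ^ 2 = 1/2 - x := Real.sq_sqrt hb
  have hab : sa * sb = u := by rw [hu, Real.sqrt_mul ha]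
  clear_value sa sb u
  have hs2 : (sa + sb) ^ 2 = 1 + 2*u := by nlinarith
  have hd2 : (sa - sb) ^ 2 = 1 - 2*u := by nlinarith
  have key : ∀ y : ℝ, 0 ≤ y → y ^ p = (y ^ 2) ^ q := by
    intro y hy
    have h2 : ((2:ℕ):ℝ) * q = p := by rw [hq]; push_cast; ring
    rw [← Real.rpow_natCast y 2, ← Real.rpow_mul hy, h2]
  have habs1 : |sa + sb| = sa + sb := abs_of_nonneg (by linarith)
  have habs2 : |sa - sb| = sa - sb := abs_of_nonneg (by linarith)
  rw [habs1, habs2, key _ (by linarith), key _ (by linarith), hs2, hd2]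
  have ht0 : 0 ≤ 2 * u := by linarith
  have ht1 : 2 * u ≤ 1 := by linarith
  have hx2eq : x ^ 2 = (1 - (2*u) ^ 2) / 4 := by
    have e : (2*u) ^ 2 = 4 * u ^ 2 := by ring
    rw [e]; linarith [husq]
  rw [hx2eq]
  exact two_coeff_chord q (2*u) hq1 ht0 ht1
end
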